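/- arXiv:2407.14186 — 5 statements merged into one kernel-verified Lean document; each statement's English description precedes it below -/
import Mathlib

section
/- Let ν be a compactly supported Borel probability measure on ℝ that is not a Dirac mass, ρ a Borel probability measure on ℝ, c : ℝ³ → ℝ a bounded measurable function with |c| ≤ C_c, and g : ℝ → ℝ a bounded measurable function with |g| ≤ C_g ν-a.e. Write Y̲ = inf(supp ν) and Ȳ = sup(supp ν). Then for every x ∈ ℝ with Y̲ < x < Ȳ, the function Φ_x(h) = ∫ (y−x)·exp(−c(x,y,z)−g(y)−h·(y−x)) d(ν⊗ρ)(y,z) is continuous and strictly decreasing in h, satisfies Φ_x(h) > 0 for all sufficiently negative h and Φ_x(h) < 0 for all sufficiently large h, and hence admits a unique zero h(x) ∈ ℝ. Moreover, for every compact set K ⊂ (Y̲, Ȳ) there is a constant c_h, depending only on C_c, C_g, ν and K, such that sup_{x ∈ K} |h(x)| ≤ c_h. -/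
open MeasureTheory Filter Set

/-- Topological support of a Borel measure on ℝ. -/
noncomputable def msupp (ν : Measure ℝ) : Set ℝ := {x | ∀ U ∈ nhds x, 0 < ν U}

lemma msupp_compl_null (ν : Measure ℝ) : ν (msupp ν)ᶜ = 0 := by
  set N : ℚ × ℚ → Set ℝ := fun p =>
    if ν (Set.Ioo (p.1 : ℝ) (p.2 : ℝ)) = 0 then Set.Ioo (p.1 : ℝ) (p.2 : ℝ) else ∅ with hN
  have hNnull : ν (⋃ p, N p) = 0 := by
    refine measure_iUnion_null fun p => ?_
    by_cases h : ν (Set.Ioo (p.1 : ℝ) (p.2 : ℝ)) = 0 <;> simp [hN, h]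
  refine measure_mono_null ?_ hNnull
  intro x hx
  simp only [mem_compl_iff, msupp, mem_setOf_eq, not_forall] at hx
  obtain ⟨U, hU, hU0⟩ := hx
  have hU0' : ν U = 0 := by simpa using hU0
  obtain ⟨ε, hε, hball⟩ := Metric.mem_nhds_iff.1 hU
  obtain ⟨p, hp1, hp2⟩ := exists_rat_btwn (show x - ε < x by linarith)
  obtain ⟨q, hq1, hq2⟩ := exists_rat_btwn (show x < x + ε by linarith)
  have hsub : Set.Ioo (p : ℝ) (q : ℝ) ⊆ U := by
    refine subset_trans ?_ hball
    rw [Real.ball_eq_Ioo]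
    exact Set.Ioo_subset_Ioo hp1.le hq2.le
  have hnull : ν (Set.Ioo (p : ℝ) (q : ℝ)) = 0 := measure_mono_null hsub hU0'
  refine Set.mem_iUnion.2 ⟨(p, q), ?_⟩
  simp only [hN, hnull, if_pos]
  exact ⟨hp2, hq1⟩

lemma ae_mem_Icc_of_compact (ν : Measure ℝ) (hνc : IsCompact (msupp ν)) :
    ∀ᵐ y ∂ν, y ∈ Set.Icc (sInf (msupp ν)) (sSup (msupp ν)) := by
  have h1 : msupp ν ⊆ Set.Icc (sInf (msupp ν)) (sSup (msupp ν)) := fun y hy =>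
    ⟨csInf_le hνc.bddBelow hy, le_csSup hνc.bddAbove hy⟩
  have h2 : ν (Set.Icc (sInf (msupp ν)) (sSup (msupp ν)))ᶜ = 0 :=
    measure_mono_null (Set.compl_subset_compl.2 h1) (msupp_compl_null ν)
  rw [ae_iff]
  refine measure_mono_null ?_ h2
  intro y hy
  simpa using hy

lemma ae_fst_prod {ν ρ : Measure ℝ} [SFinite ν] [SFinite ρ] {P : ℝ → Prop}
    (h : ∀ᵐ y ∂ν, P y) : ∀ᵐ q : ℝ × ℝ ∂(ν.prod ρ), P q.1 := by
  rw [ae_iff] at h ⊢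
  have hset : {q : ℝ × ℝ | ¬ P q.1} = {y | ¬ P y} ×ˢ Set.univ := by
    ext q; simp
  rw [hset, Measure.prod_prod, h, zero_mul]

section Est

variable (ν ρ : Measure ℝ) [IsProbabilityMeasure ν] [IsProbabilityMeasure ρ]
  (c : ℝ × ℝ × ℝ → ℝ) (Cc : ℝ) (g : ℝ → ℝ) (Cg : ℝ)

lemma FI_meas (hcm : Measurable c) (hgm : Measurable g) (x a : ℝ) :
    Measurable (fun q : ℝ × ℝ =>
      (q.1 - x) * Real.exp (-c (x, q.1, q.2) - g q.1 - a * (q.1 - x))) := by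
  have h₁ : Measurable fun q : ℝ × ℝ => ((x, q.1, q.2) : ℝ × ℝ × ℝ) :=
    measurable_const.prodMk (measurable_fst.prodMk measurable_snd)
  exact (measurable_fst.sub measurable_const).mul
    (Real.measurable_exp.comp
      (((hcm.comp h₁).neg.sub (hgm.comp measurable_fst)).sub
        ((measurable_fst.sub measurable_const).const_mul a)))

lemma FI_bound (hcb : ∀ p, |c p| ≤ Cc) (hgb : ∀ᵐ y ∂ν, |g y| ≤ Cg)
    (lo hi : ℝ) (hae : ∀ᵐ y ∂ν, y ∈ Set.Icc lo hi) (x : ℝ) (M a : ℝ) (haM : |a| ≤ M) :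
    ∀ᵐ q : ℝ × ℝ ∂(ν.prod ρ),
      ‖(q.1 - x) * Real.exp (-c (x, q.1, q.2) - g q.1 - a * (q.1 - x))‖ ≤
        (|lo - x| + |hi - x|) * Real.exp (Cc + Cg + M * (|lo - x| + |hi - x|)) := by
  have hae2 : ∀ᵐ q : ℝ × ℝ ∂(ν.prod ρ), q.1 ∈ Set.Icc lo hi ∧ |g q.1| ≤ Cg :=
    ae_fst_prod (hae.and hgb)
  filter_upwards [hae2] with q hq
  obtain ⟨⟨hq1, hq2⟩, hg⟩ := hq
  set R := |lo - x| + |hi - x| with hR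
  have hyx : |q.1 - x| ≤ R := by
    rw [abs_le]
    constructor
    · have := neg_abs_le (lo - x); have := abs_nonneg (hi - x); linarith
    · have := le_abs_self (hi - x); have := abs_nonneg (lo - x); linarith
  have hcq := hcb (x, q.1, q.2)
  have hMnn : 0 ≤ M := le_trans (abs_nonneg a) haM
  have hexp : -c (x, q.1, q.2) - g q.1 - a * (q.1 - x) ≤ Cc + Cg + M * R := by
    have h1 : -c (x, q.1, q.2) ≤ Cc := by
      have := neg_abs_le (c (x, q.1, q.2)); linarith
    have h2 : -g q.1 ≤ Cg := by have := neg_abs_le (g q.1); linarith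
    have h3 : -(a * (q.1 - x)) ≤ M * R := by
      have : |a * (q.1 - x)| ≤ M * R := by
        rw [abs_mul]
        exact mul_le_mul haM hyx (abs_nonneg _) hMnn
      have := neg_abs_le (a * (q.1 - x)); linarith
    linarith
  rw [norm_mul, Real.norm_eq_abs, Real.norm_eq_abs, Real.abs_exp]
  have hRnn : 0 ≤ R := le_trans (abs_nonneg _) hyx
  exact mul_le_mul hyx (Real.exp_le_exp.2 hexp) (Real.exp_pos _).le hRnn

lemma FI_integrable (hcm : Measurable c) (hgm : Measurable g)
    (hcb : ∀ p, |c p| ≤ Cc) (hgb : ∀ᵐ y ∂ν, |g y| ≤ Cg)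
    (lo hi : ℝ) (hae : ∀ᵐ y ∂ν, y ∈ Set.Icc lo hi) (x a : ℝ) :
    Integrable (fun q : ℝ × ℝ =>
      (q.1 - x) * Real.exp (-c (x, q.1, q.2) - g q.1 - a * (q.1 - x))) (ν.prod ρ) :=
  (integrable_const _).mono' (FI_meas c g hcm hgm x a).aestronglyMeasurable
    (FI_bound ν ρ c Cc g Cg hcb hgb lo hi hae x |a| a le_rfl)

end Est

section Est2

variable (ν ρ : Measure ℝ) [IsProbabilityMeasure ν] [IsProbabilityMeasure ρ]
  (c : ℝ × ℝ × ℝ → ℝ) (Cc : ℝ) (g : ℝ → ℝ) (Cg : ℝ)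

lemma measure_fst_preimage (s : Set ℝ) :
    (ν.prod ρ) (Prod.fst ⁻¹' s) = ν s := by
  rw [← Set.prod_univ, Measure.prod_prod, measure_univ, mul_one]

lemma est_low (hcm : Measurable c) (hgm : Measurable g)
    (hcb : ∀ p, |c p| ≤ Cc) (hgb : ∀ᵐ y ∂ν, |g y| ≤ Cg)
    (lo hi : ℝ) (hae : ∀ᵐ y ∂ν, y ∈ Set.Icc lo hi)
    (x δ a : ℝ) (hδ : 0 < δ) (hlo : lo ≤ x) (hhi : x ≤ hi) (ha : a ≤ 0) :
    δ * (ν (Set.Ioi (x + δ))).toReal * Real.exp (-Cc - Cg - a * δ)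
      - (hi - lo) * Real.exp (Cc + Cg)
      ≤ ∫ q : ℝ × ℝ, (q.1 - x) * Real.exp (-c (x, q.1, q.2) - g q.1 - a * (q.1 - x))
          ∂(ν.prod ρ) := by
  set μ := ν.prod ρ with hμ
  set f : ℝ × ℝ → ℝ := fun q =>
    (q.1 - x) * Real.exp (-c (x, q.1, q.2) - g q.1 - a * (q.1 - x)) with hf
  have hint : Integrable f μ := FI_integrable ν ρ c Cc g Cg hcm hgm hcb hgb lo hi hae x a
  set A : Set (ℝ × ℝ) := Prod.fst ⁻¹' (Set.Ioi x) with hA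
  set A' : Set (ℝ × ℝ) := Prod.fst ⁻¹' (Set.Ioi (x + δ)) with hA'
  have hAm : MeasurableSet A := measurable_fst measurableSet_Ioi
  have hA'm : MeasurableSet A' := measurable_fst measurableSet_Ioi
  have hsub : A' ⊆ A := by
    intro q hq
    simp only [hA', hA, Set.mem_preimage, Set.mem_Ioi] at hq ⊢
    linarith
  have hsplit : ∫ q in A, f q ∂μ + ∫ q in Aᶜ, f q ∂μ = ∫ q, f q ∂μ :=
    integral_add_compl hAm hint
  -- a.e. facts
  have haeg : ∀ᵐ q : ℝ × ℝ ∂μ, q.1 ∈ Set.Icc lo hi ∧ |g q.1| ≤ Cg :=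
    ae_fst_prod (hae.and hgb)
  -- bound on Aᶜ
  have hcompl : -( (hi - lo) * Real.exp (Cc + Cg)) ≤ ∫ q in Aᶜ, f q ∂μ := by
    have hconst : ∫ q in Aᶜ, (-(hi - lo) * Real.exp (Cc + Cg)) ∂μ
        = (-(hi - lo) * Real.exp (Cc + Cg)) * (μ Aᶜ).toReal := by
      rw [setIntegral_const, smul_eq_mul, measureReal_def]; ring
    have hmono : ∫ q in Aᶜ, (-(hi - lo) * Real.exp (Cc + Cg)) ∂μ ≤ ∫ q in Aᶜ, f q ∂μ := by
      refine setIntegral_mono_ae_restrict (integrableOn_const ?_) hint.integrableOn ?_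
      · exact measure_ne_top _ _
      · filter_upwards [ae_restrict_mem hAm.compl, ae_restrict_of_ae haeg] with q hqA hq
        obtain ⟨⟨h1, h2⟩, hg⟩ := hq
        have hyx : q.1 - x ≤ 0 := by
          simp only [hA, Set.mem_compl_iff, Set.mem_preimage, Set.mem_Ioi, not_lt] at hqA
          linarith
        have hexp : -c (x, q.1, q.2) - g q.1 - a * (q.1 - x) ≤ Cc + Cg := by
          have hc1 := neg_abs_le (c (x, q.1, q.2)); have hc2 := hcb (x, q.1, q.2)
          have hg1 := neg_abs_le (g q.1)
          have : -(a * (q.1 - x)) ≤ 0 := by nlinarith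
          linarith
        have h3 : (q.1 - x) * Real.exp (-c (x, q.1, q.2) - g q.1 - a * (q.1 - x))
            ≥ (q.1 - x) * Real.exp (Cc + Cg) :=
          mul_le_mul_of_nonpos_left (Real.exp_le_exp.2 hexp) hyx
        have h4 : (q.1 - x) * Real.exp (Cc + Cg) ≥ (lo - hi) * Real.exp (Cc + Cg) := by
          have : lo - hi ≤ q.1 - x := by linarith
          exact mul_le_mul_of_nonneg_right this (Real.exp_pos _).le
        simp only [hf]
        nlinarith
    have hμc : (μ Aᶜ).toReal ≤ 1 := by
      have := ENNReal.toReal_mono (by simp) (prob_le_one (μ := μ) (s := Aᶜ))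
      simpa using this
    have hcn : -(hi - lo) * Real.exp (Cc + Cg) ≤ 0 := by
      have : (0:ℝ) ≤ (hi - lo) * Real.exp (Cc + Cg) :=
        mul_nonneg (by linarith) (Real.exp_pos _).le
      linarith
    nlinarith [ENNReal.toReal_nonneg (a := μ Aᶜ)]
  -- bound on A
  have hmain : δ * (ν (Set.Ioi (x + δ))).toReal * Real.exp (-Cc - Cg - a * δ)
      ≤ ∫ q in A, f q ∂μ := by
    have hnn : 0 ≤ᵐ[μ.restrict A] f := by
      filter_upwards [ae_restrict_mem hAm] with q hq
      have : 0 < q.1 - x := by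
        simp only [hA, Set.mem_preimage, Set.mem_Ioi] at hq; linarith
      exact mul_nonneg this.le (Real.exp_pos _).le
    have hsub2 : ∫ q in A', f q ∂μ ≤ ∫ q in A, f q ∂μ :=
      setIntegral_mono_set hint.integrableOn hnn (HasSubset.Subset.eventuallyLE hsub)
    have hconst : ∫ q in A', (δ * Real.exp (-Cc - Cg - a * δ)) ∂μ
        ≤ ∫ q in A', f q ∂μ := by
      refine setIntegral_mono_ae_restrict (integrableOn_const ?_) hint.integrableOn ?_
      · exact measure_ne_top _ _
      · filter_upwards [ae_restrict_mem hA'm, ae_restrict_of_ae haeg] with q hqA hq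
        obtain ⟨⟨h1, h2⟩, hg⟩ := hq
        have hyx : δ ≤ q.1 - x := by
          simp only [hA', Set.mem_preimage, Set.mem_Ioi] at hqA; linarith
        have hexp : -Cc - Cg - a * δ ≤ -c (x, q.1, q.2) - g q.1 - a * (q.1 - x) := by
          have hc1 := le_abs_self (c (x, q.1, q.2)); have hc2 := hcb (x, q.1, q.2)
          have hg1 := le_abs_self (g q.1)
          have : -(a * (q.1 - x)) ≥ -(a * δ) := by nlinarith
          linarith
        simp only [hf]
        have := Real.exp_le_exp.2 hexp
        nlinarith [Real.exp_pos (-Cc - Cg - a * δ), hδ]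
    have hμA' : (μ A').toReal = (ν (Set.Ioi (x + δ))).toReal := by
      rw [hA', measure_fst_preimage]
    rw [setIntegral_const, smul_eq_mul, measureReal_def, hμA'] at hconst
    calc δ * (ν (Set.Ioi (x + δ))).toReal * Real.exp (-Cc - Cg - a * δ)
        = δ * Real.exp (-Cc - Cg - a * δ) * (ν (Set.Ioi (x + δ))).toReal := by ring
      _ ≤ ∫ q in A', f q ∂μ := by
          rw [show δ * Real.exp (-Cc - Cg - a * δ) * (ν (Set.Ioi (x + δ))).toReal
              = (ν (Set.Ioi (x + δ))).toReal * (δ * Real.exp (-Cc - Cg - a * δ)) from by ring]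
          exact hconst
      _ ≤ ∫ q in A, f q ∂μ := hsub2
  linarith

lemma est_high (hcm : Measurable c) (hgm : Measurable g)
    (hcb : ∀ p, |c p| ≤ Cc) (hgb : ∀ᵐ y ∂ν, |g y| ≤ Cg)
    (lo hi : ℝ) (hae : ∀ᵐ y ∂ν, y ∈ Set.Icc lo hi)
    (x δ a : ℝ) (hδ : 0 < δ) (hlo : lo ≤ x) (hhi : x ≤ hi) (ha : 0 ≤ a) :
    ∫ q : ℝ × ℝ, (q.1 - x) * Real.exp (-c (x, q.1, q.2) - g q.1 - a * (q.1 - x)) ∂(ν.prod ρ)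
      ≤ -(δ * (ν (Set.Iio (x - δ))).toReal * Real.exp (-Cc - Cg + a * δ))
        + (hi - lo) * Real.exp (Cc + Cg) := by
  set μ := ν.prod ρ with hμ
  set f : ℝ × ℝ → ℝ := fun q =>
    (q.1 - x) * Real.exp (-c (x, q.1, q.2) - g q.1 - a * (q.1 - x)) with hf
  have hint : Integrable f μ := FI_integrable ν ρ c Cc g Cg hcm hgm hcb hgb lo hi hae x a
  set A : Set (ℝ × ℝ) := Prod.fst ⁻¹' (Set.Iio x) with hA
  set A' : Set (ℝ × ℝ) := Prod.fst ⁻¹' (Set.Iio (x - δ)) with hA'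
  have hAm : MeasurableSet A := measurable_fst measurableSet_Iio
  have hA'm : MeasurableSet A' := measurable_fst measurableSet_Iio
  have hsub : A' ⊆ A := by
    intro q hq
    simp only [hA', hA, Set.mem_preimage, Set.mem_Iio] at hq ⊢
    linarith
  have hsplit : ∫ q in A, f q ∂μ + ∫ q in Aᶜ, f q ∂μ = ∫ q, f q ∂μ :=
    integral_add_compl hAm hint
  have haeg : ∀ᵐ q : ℝ × ℝ ∂μ, q.1 ∈ Set.Icc lo hi ∧ |g q.1| ≤ Cg :=
    ae_fst_prod (hae.and hgb)
  -- bound on Aᶜ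
  have hcompl : ∫ q in Aᶜ, f q ∂μ ≤ (hi - lo) * Real.exp (Cc + Cg) := by
    have hmono : ∫ q in Aᶜ, f q ∂μ ≤ ∫ q in Aᶜ, ((hi - lo) * Real.exp (Cc + Cg)) ∂μ := by
      refine setIntegral_mono_ae_restrict hint.integrableOn (integrableOn_const ?_) ?_
      · exact measure_ne_top _ _
      · filter_upwards [ae_restrict_mem hAm.compl, ae_restrict_of_ae haeg] with q hqA hq
        obtain ⟨⟨h1, h2⟩, hg⟩ := hq
        have hyx : 0 ≤ q.1 - x := by
          simp only [hA, Set.mem_compl_iff, Set.mem_preimage, Set.mem_Iio, not_lt] at hqA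
          linarith
        have hexp : -c (x, q.1, q.2) - g q.1 - a * (q.1 - x) ≤ Cc + Cg := by
          have hc1 := neg_abs_le (c (x, q.1, q.2)); have hc2 := hcb (x, q.1, q.2)
          have hg1 := neg_abs_le (g q.1)
          have : -(a * (q.1 - x)) ≤ 0 := by nlinarith
          linarith
        have h3 : (q.1 - x) * Real.exp (-c (x, q.1, q.2) - g q.1 - a * (q.1 - x))
            ≤ (q.1 - x) * Real.exp (Cc + Cg) :=
          mul_le_mul_of_nonneg_left (Real.exp_le_exp.2 hexp) hyx
        have h4 : (q.1 - x) * Real.exp (Cc + Cg) ≤ (hi - lo) * Real.exp (Cc + Cg) := by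
          have : q.1 - x ≤ hi - lo := by linarith
          exact mul_le_mul_of_nonneg_right this (Real.exp_pos _).le
        simp only [hf]
        linarith
    have hconst : ∫ q in Aᶜ, ((hi - lo) * Real.exp (Cc + Cg)) ∂μ
        = ((hi - lo) * Real.exp (Cc + Cg)) * (μ Aᶜ).toReal := by
      rw [setIntegral_const, smul_eq_mul, measureReal_def]; ring
    have hμc : (μ Aᶜ).toReal ≤ 1 := by
      have := ENNReal.toReal_mono (by simp) (prob_le_one (μ := μ) (s := Aᶜ))
      simpa using this
    have hcn : 0 ≤ (hi - lo) * Real.exp (Cc + Cg) :=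
      mul_nonneg (by linarith) (Real.exp_pos _).le
    nlinarith [ENNReal.toReal_nonneg (a := μ Aᶜ)]
  -- bound on A
  have hmain : ∫ q in A, f q ∂μ
      ≤ -(δ * (ν (Set.Iio (x - δ))).toReal * Real.exp (-Cc - Cg + a * δ)) := by
    have hnn : 0 ≤ᵐ[μ.restrict A] (fun q => -f q) := by
      filter_upwards [ae_restrict_mem hAm] with q hq
      have hlt : q.1 - x < 0 := by
        simp only [hA, Set.mem_preimage, Set.mem_Iio] at hq; linarith
      show (0:ℝ) ≤ -f q
      simp only [hf]
      nlinarith [Real.exp_pos (-c (x, q.1, q.2) - g q.1 - a * (q.1 - x))]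
    have hsub2 : ∫ q in A, f q ∂μ ≤ ∫ q in A', f q ∂μ := by
      have hneg := setIntegral_mono_set hint.neg.integrableOn hnn
        (HasSubset.Subset.eventuallyLE hsub)
      simp only [Pi.neg_apply, integral_neg] at hneg
      linarith
    have hconst : ∫ q in A', f q ∂μ
        ≤ ∫ q in A', (-(δ * Real.exp (-Cc - Cg + a * δ))) ∂μ := by
      refine setIntegral_mono_ae_restrict hint.integrableOn (integrableOn_const ?_) ?_
      · exact measure_ne_top _ _
      · filter_upwards [ae_restrict_mem hA'm, ae_restrict_of_ae haeg] with q hqA hq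
        obtain ⟨⟨h1, h2⟩, hg⟩ := hq
        have hyx : q.1 - x ≤ -δ := by
          simp only [hA', Set.mem_preimage, Set.mem_Iio] at hqA; linarith
        have hexp : -Cc - Cg + a * δ ≤ -c (x, q.1, q.2) - g q.1 - a * (q.1 - x) := by
          have hc1 := le_abs_self (c (x, q.1, q.2)); have hc2 := hcb (x, q.1, q.2)
          have hg1 := le_abs_self (g q.1)
          have : a * δ ≤ -(a * (q.1 - x)) := by nlinarith
          linarith
        simp only [hf]
        have h5 := Real.exp_le_exp.2 hexp
        have h6 : (q.1 - x) * Real.exp (-c (x, q.1, q.2) - g q.1 - a * (q.1 - x))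
            ≤ (q.1 - x) * Real.exp (-Cc - Cg + a * δ) :=
          mul_le_mul_of_nonpos_left h5 (by linarith)
        have h7 : (q.1 - x) * Real.exp (-Cc - Cg + a * δ)
            ≤ -δ * Real.exp (-Cc - Cg + a * δ) :=
          mul_le_mul_of_nonneg_right hyx (Real.exp_pos _).le
        linarith
    have hμA' : (μ A').toReal = (ν (Set.Iio (x - δ))).toReal := by
      rw [hA', measure_fst_preimage]
    rw [setIntegral_const, smul_eq_mul, measureReal_def, hμA'] at hconst
    calc ∫ q in A, f q ∂μ ≤ ∫ q in A', f q ∂μ := hsub2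
      _ ≤ (ν (Set.Iio (x - δ))).toReal * -(δ * Real.exp (-Cc - Cg + a * δ)) := hconst
      _ = -(δ * (ν (Set.Iio (x - δ))).toReal * Real.exp (-Cc - Cg + a * δ)) := by ring
  linarith

end Est2
section Main

theorem stmt_0
    (ν ρ : Measure ℝ) [IsProbabilityMeasure ν] [IsProbabilityMeasure ρ]
    (hνc : IsCompact (msupp ν))
    (hνnd : ∀ y₀ : ℝ, ν ≠ Measure.dirac y₀)
    (c : ℝ × ℝ × ℝ → ℝ) (Cc : ℝ) (hcm : Measurable c) (hcb : ∀ p, |c p| ≤ Cc)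
    (g : ℝ → ℝ) (Cg : ℝ) (hgm : Measurable g) (hgb : ∀ᵐ y ∂ν, |g y| ≤ Cg)
    (Φ : ℝ → ℝ → ℝ)
    (hΦ : ∀ x a, Φ x a = ∫ q : ℝ × ℝ,
        (q.1 - x) * Real.exp (-c (x, q.1, q.2) - g q.1 - a * (q.1 - x)) ∂(ν.prod ρ)) :
    (∀ x ∈ Set.Ioo (sInf (msupp ν)) (sSup (msupp ν)),
      Continuous (Φ x) ∧ StrictAnti (Φ x) ∧
      (∀ᶠ a in atBot, 0 < Φ x a) ∧ (∀ᶠ a in atTop, Φ x a < 0) ∧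
      (∃! a : ℝ, Φ x a = 0)) ∧
    (∀ K : Set ℝ, K ⊆ Set.Ioo (sInf (msupp ν)) (sSup (msupp ν)) → IsCompact K →
      ∃ ch : ℝ, ∀ x ∈ K, ∀ a : ℝ, Φ x a = 0 → |a| ≤ ch) := by
  classical
  set Y := sInf (msupp ν) with hYdef
  set Z := sSup (msupp ν) with hZdef
  have hae : ∀ᵐ y ∂ν, y ∈ Set.Icc Y Z := ae_mem_Icc_of_compact ν hνc
  have hne : (msupp ν).Nonempty := by
    by_contra h
    rw [Set.not_nonempty_iff_eq_empty] at h
    have h0 := msupp_compl_null ν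
    rw [h, Set.compl_empty] at h0
    simp [measure_univ] at h0
  have hZm : Z ∈ msupp ν := hνc.sSup_mem hne
  have hYm : Y ∈ msupp ν := hνc.sInf_mem hne
  simp only [msupp, Set.mem_setOf_eq] at hZm hYm
  have hIoi : ∀ t, t < Z → 0 < ν (Set.Ioi t) := fun t ht => hZm _ (Ioi_mem_nhds ht)
  have hIio : ∀ t, Y < t → 0 < ν (Set.Iio t) := fun t ht => hYm _ (Iio_mem_nhds ht)
  have hinteg : ∀ x a, Integrable (fun q : ℝ × ℝ =>
      (q.1 - x) * Real.exp (-c (x, q.1, q.2) - g q.1 - a * (q.1 - x))) (ν.prod ρ) :=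
    fun x a => FI_integrable ν ρ c Cc g Cg hcm hgm hcb hgb Y Z hae x a
  constructor
  · rintro x ⟨hx1, hx2⟩
    have heq : Φ x = fun a => ∫ q : ℝ × ℝ,
        (q.1 - x) * Real.exp (-c (x, q.1, q.2) - g q.1 - a * (q.1 - x)) ∂(ν.prod ρ) :=
      funext (hΦ x)
    -- continuity
    have hcont : Continuous (Φ x) := by
      rw [heq, continuous_iff_continuousAt]
      intro a₀
      refine continuousAt_of_dominated ?_ ?_ ?_ ?_
        (bound := fun _ => (|Y - x| + |Z - x|) *
          Real.exp (Cc + Cg + (|a₀| + 1) * (|Y - x| + |Z - x|)))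
      · exact Eventually.of_forall fun a =>
          (FI_meas c g hcm hgm x a).aestronglyMeasurable
      · filter_upwards [Metric.ball_mem_nhds a₀ one_pos] with a ha
        have haM : |a| ≤ |a₀| + 1 := by
          have h1 : |a - a₀| < 1 := by rwa [Metric.mem_ball, Real.dist_eq] at ha
          have h2 := abs_sub_abs_le_abs_sub a a₀
          linarith
        exact FI_bound ν ρ c Cc g Cg hcb hgb Y Z hae x (|a₀| + 1) a haM
      · exact integrable_const _
      · refine Eventually.of_forall fun q => ?_
        have : Continuous fun a : ℝ =>
            (q.1 - x) * Real.exp (-c (x, q.1, q.2) - g q.1 - a * (q.1 - x)) := by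
          refine continuous_const.mul (Real.continuous_exp.comp ?_)
          exact continuous_const.sub (continuous_id.mul continuous_const)
        exact this.continuousAt
    -- strict antitonicity
    have hanti : StrictAnti (Φ x) := by
      intro a b hab
      have hGnn : ∀ q : ℝ × ℝ, 0 ≤
          (q.1 - x) * Real.exp (-c (x, q.1, q.2) - g q.1 - a * (q.1 - x)) -
          (q.1 - x) * Real.exp (-c (x, q.1, q.2) - g q.1 - b * (q.1 - x)) := by
        intro q
        rcases le_total q.1 x with h | h
        · have h1 : -c (x, q.1, q.2) - g q.1 - a * (q.1 - x)
              ≤ -c (x, q.1, q.2) - g q.1 - b * (q.1 - x) := by nlinarith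
          have h2 := Real.exp_le_exp.2 h1
          have h3 : q.1 - x ≤ 0 := by linarith
          nlinarith
        · have h1 : -c (x, q.1, q.2) - g q.1 - b * (q.1 - x)
              ≤ -c (x, q.1, q.2) - g q.1 - a * (q.1 - x) := by nlinarith
          have h2 := Real.exp_le_exp.2 h1
          have h3 : 0 ≤ q.1 - x := by linarith
          nlinarith
      have hGint := (hinteg x a).sub (hinteg x b)
      have hdiff : 0 < ∫ q : ℝ × ℝ,
          ((q.1 - x) * Real.exp (-c (x, q.1, q.2) - g q.1 - a * (q.1 - x)) -
           (q.1 - x) * Real.exp (-c (x, q.1, q.2) - g q.1 - b * (q.1 - x))) ∂(ν.prod ρ) := by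
        rw [integral_pos_iff_support_of_nonneg_ae (Eventually.of_forall hGnn) hGint]
        have hsupp : (Prod.fst ⁻¹' (Set.Ioi x) : Set (ℝ × ℝ)) ⊆ Function.support
            (fun q : ℝ × ℝ =>
              (q.1 - x) * Real.exp (-c (x, q.1, q.2) - g q.1 - a * (q.1 - x)) -
              (q.1 - x) * Real.exp (-c (x, q.1, q.2) - g q.1 - b * (q.1 - x))) := by
          intro q hq
          simp only [Set.mem_preimage, Set.mem_Ioi] at hq
          have h3 : 0 < q.1 - x := by linarith
          have h1 : -c (x, q.1, q.2) - g q.1 - b * (q.1 - x)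
              < -c (x, q.1, q.2) - g q.1 - a * (q.1 - x) := by nlinarith
          have h2 := Real.exp_lt_exp.2 h1
          have : 0 < (q.1 - x) * Real.exp (-c (x, q.1, q.2) - g q.1 - a * (q.1 - x)) -
              (q.1 - x) * Real.exp (-c (x, q.1, q.2) - g q.1 - b * (q.1 - x)) := by nlinarith
          exact Function.mem_support.2 (ne_of_gt this)
        refine lt_of_lt_of_le ?_ (measure_mono hsupp)
        rw [measure_fst_preimage]
        exact hIoi x hx2
      rw [integral_sub (hinteg x a) (hinteg x b)] at hdiff
      rw [hΦ x a, hΦ x b]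
      linarith
    -- eventually positive at -infty
    have hbot : ∀ᶠ a in atBot, 0 < Φ x a := by
      rw [eventually_atBot]
      set δ := (Z - x) / 2 with hδdef
      have hδ : 0 < δ := by simp only [hδdef]; linarith
      set m := (ν (Set.Ioi (x + δ))).toReal with hm
      have hm0 : 0 < m :=
        ENNReal.toReal_pos (hIoi (x + δ) (by simp only [hδdef]; linarith)).ne'
          (measure_ne_top ν _)
      set P := δ * m * Real.exp (-Cc - Cg) with hP
      have hP0 : 0 < P := by positivity
      set Q := (Z - Y) * Real.exp (Cc + Cg) with hQ
      have hQ0 : 0 < Q := mul_pos (by linarith) (Real.exp_pos _)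
      refine ⟨min 0 (-(Real.log ((Q + 1) / P)) / δ), fun a haa => ?_⟩
      have ha0 : a ≤ 0 := le_trans haa (min_le_left _ _)
      have hat : a * δ ≤ -(Real.log ((Q + 1) / P)) :=
        (le_div_iff₀ hδ).1 (le_trans haa (min_le_right _ _))
      have hest := est_low ν ρ c Cc g Cg hcm hgm hcb hgb Y Z hae x δ a hδ hx1.le hx2.le ha0
      have hexpand : Real.exp (-Cc - Cg - a * δ)
          = Real.exp (-Cc - Cg) * Real.exp (-(a * δ)) := by
        rw [← Real.exp_add]; ring_nf
      have hkey : Q + 1 ≤ P * Real.exp (-(a * δ)) := by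
        have hpos : 0 < (Q + 1) / P := by positivity
        have hlog : Real.log ((Q + 1) / P) ≤ -(a * δ) := by linarith
        have h5 := (Real.log_le_iff_le_exp hpos).1 hlog
        calc Q + 1 = (Q + 1) / P * P := by field_simp
          _ ≤ Real.exp (-(a * δ)) * P := mul_le_mul_of_nonneg_right h5 hP0.le
          _ = P * Real.exp (-(a * δ)) := by ring
      have hPe : δ * m * Real.exp (-Cc - Cg - a * δ) = P * Real.exp (-(a * δ)) := by
        rw [hexpand, hP]; ring
      rw [hΦ x a]
      linarith
    -- eventually negative at +infty
    have htop : ∀ᶠ a in atTop, Φ x a < 0 := by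
      rw [eventually_atTop]
      set δ := (x - Y) / 2 with hδdef
      have hδ : 0 < δ := by simp only [hδdef]; linarith
      set m := (ν (Set.Iio (x - δ))).toReal with hm
      have hm0 : 0 < m :=
        ENNReal.toReal_pos (hIio (x - δ) (by simp only [hδdef]; linarith)).ne'
          (measure_ne_top ν _)
      set P := δ * m * Real.exp (-Cc - Cg) with hP
      have hP0 : 0 < P := by positivity
      set Q := (Z - Y) * Real.exp (Cc + Cg) with hQ
      have hQ0 : 0 < Q := mul_pos (by linarith) (Real.exp_pos _)
      refine ⟨max 0 (Real.log ((Q + 1) / P) / δ), fun a haa => ?_⟩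
      have ha0 : 0 ≤ a := le_trans (le_max_left _ _) haa
      have hat : Real.log ((Q + 1) / P) ≤ a * δ :=
        (div_le_iff₀ hδ).1 (le_trans (le_max_right _ _) haa)
      have hest := est_high ν ρ c Cc g Cg hcm hgm hcb hgb Y Z hae x δ a hδ hx1.le hx2.le ha0
      have hexpand : Real.exp (-Cc - Cg + a * δ)
          = Real.exp (-Cc - Cg) * Real.exp (a * δ) := by
        rw [← Real.exp_add]
      have hkey : Q + 1 ≤ P * Real.exp (a * δ) := by
        have hpos : 0 < (Q + 1) / P := by positivity
        have h5 := (Real.log_le_iff_le_exp hpos).1 hat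
        calc Q + 1 = (Q + 1) / P * P := by field_simp
          _ ≤ Real.exp (a * δ) * P := mul_le_mul_of_nonneg_right h5 hP0.le
          _ = P * Real.exp (a * δ) := by ring
      have hPe : δ * m * Real.exp (-Cc - Cg + a * δ) = P * Real.exp (a * δ) := by
        rw [hexpand, hP]; ring
      rw [hΦ x a]
      linarith
    -- unique zero
    have hex : ∃! a : ℝ, Φ x a = 0 := by
      obtain ⟨a₁, ha₁⟩ := hbot.exists
      obtain ⟨a₂, ha₂⟩ := htop.exists
      have h12 : a₁ < a₂ := by
        by_contra h
        push_neg at h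
        have := hanti.antitone h
        linarith
      obtain ⟨a0, _, ha0⟩ := intermediate_value_Icc' h12.le hcont.continuousOn
        (Set.mem_Icc.2 ⟨ha₂.le, ha₁.le⟩)
      exact ⟨a0, ha0, fun y hy => hanti.injective (by rw [hy, ha0])⟩
    exact ⟨hcont, hanti, hbot, htop, hex⟩
  · intro K hK hKc
    rcases K.eq_empty_or_nonempty with rfl | hKne
    · exact ⟨0, fun x hx => absurd hx (Set.notMem_empty x)⟩
    have hsInfK : sInf K ∈ K := hKc.sInf_mem hKne
    have hsSupK : sSup K ∈ K := hKc.sSup_mem hKne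
    obtain ⟨hI1, hI2⟩ := hK hsInfK
    obtain ⟨hS1, hS2⟩ := hK hsSupK
    set δ := min (sInf K - Y) (Z - sSup K) / 2 with hδdef
    have hδ0 : 0 < δ := by
      have h1 : 0 < sInf K - Y := by linarith
      have h2 : 0 < Z - sSup K := by linarith
      simp only [hδdef]
      have := lt_min h1 h2
      linarith
    have hδ1 : 2 * δ ≤ sInf K - Y := by
      have := min_le_left (sInf K - Y) (Z - sSup K); simp only [hδdef]; linarith
    have hδ2 : 2 * δ ≤ Z - sSup K := by
      have := min_le_right (sInf K - Y) (Z - sSup K); simp only [hδdef]; linarith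
    have hm1 : 0 < (ν (Set.Iio (Y + δ))).toReal :=
      ENNReal.toReal_pos (hIio (Y + δ) (by linarith)).ne' (measure_ne_top ν _)
    have hm2 : 0 < (ν (Set.Ioi (Z - δ))).toReal :=
      ENNReal.toReal_pos (hIoi (Z - δ) (by linarith)).ne' (measure_ne_top ν _)
    set m := min ((ν (Set.Iio (Y + δ))).toReal) ((ν (Set.Ioi (Z - δ))).toReal) with hm
    have hm0 : 0 < m := lt_min hm1 hm2
    set P := δ * m * Real.exp (-Cc - Cg) with hP
    have hP0 : 0 < P := by positivity
    set Q := (Z - Y) * Real.exp (Cc + Cg) with hQ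
    have hQ0 : 0 < Q := mul_pos (by linarith) (Real.exp_pos _)
    set L := Real.log ((Q + 1) / P) with hL
    refine ⟨max 0 (L / δ) + 1, ?_⟩
    intro x hxK a hΦa
    by_contra habs
    push_neg at habs
    obtain ⟨hxm1, hxm2⟩ := hK hxK
    have hxl : sInf K ≤ x := csInf_le hKc.bddBelow hxK
    have hxu : x ≤ sSup K := le_csSup hKc.bddAbove hxK
    have hx1 : Y + 2 * δ ≤ x := by linarith
    have hx2 : x ≤ Z - 2 * δ := by linarith
    rw [hΦ x a] at hΦa
    have hpos : 0 < (Q + 1) / P := by positivity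
    rcases le_or_gt 0 a with ha0 | ha0
    · -- a ≥ 0 : use est_high
      rw [abs_of_nonneg ha0] at habs
      have haL : L ≤ a * δ := by
        have h1 : L / δ ≤ max 0 (L / δ) := le_max_right _ _
        have h2 : L / δ ≤ a := by linarith
        exact (div_le_iff₀ hδ0).1 h2
      have hest := est_high ν ρ c Cc g Cg hcm hgm hcb hgb Y Z hae x δ a hδ0
        hxm1.le hxm2.le ha0
      have hmono : m ≤ (ν (Set.Iio (x - δ))).toReal := by
        refine le_trans (min_le_left _ _)
          (ENNReal.toReal_mono (measure_ne_top ν _) (measure_mono ?_))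
        exact Set.Iio_subset_Iio (by linarith)
      have hkey : Q + 1 ≤ P * Real.exp (a * δ) := by
        have h5 := (Real.log_le_iff_le_exp hpos).1 haL
        calc Q + 1 = (Q + 1) / P * P := by field_simp
          _ ≤ Real.exp (a * δ) * P := mul_le_mul_of_nonneg_right h5 hP0.le
          _ = P * Real.exp (a * δ) := by ring
      have hexpand : Real.exp (-Cc - Cg + a * δ)
          = Real.exp (-Cc - Cg) * Real.exp (a * δ) := by rw [← Real.exp_add]
      have hchain : P * Real.exp (a * δ)
          ≤ δ * (ν (Set.Iio (x - δ))).toReal * Real.exp (-Cc - Cg + a * δ) := by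
        rw [hexpand, hP]
        calc δ * m * Real.exp (-Cc - Cg) * Real.exp (a * δ)
            = (δ * (Real.exp (-Cc - Cg) * Real.exp (a * δ))) * m := by ring
          _ ≤ (δ * (Real.exp (-Cc - Cg) * Real.exp (a * δ)))
              * (ν (Set.Iio (x - δ))).toReal :=
            mul_le_mul_of_nonneg_left hmono (by positivity)
          _ = δ * (ν (Set.Iio (x - δ))).toReal
              * (Real.exp (-Cc - Cg) * Real.exp (a * δ)) := by ring
      linarith
    · -- a < 0 : use est_low
      rw [abs_of_neg ha0] at habs
      have haL : L ≤ -(a * δ) := by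
        have h2 : L / δ ≤ -a := by linarith [le_max_right 0 (L / δ)]
        have := (div_le_iff₀ hδ0).1 h2
        linarith
      have hest := est_low ν ρ c Cc g Cg hcm hgm hcb hgb Y Z hae x δ a hδ0
        hxm1.le hxm2.le ha0.le
      have hmono : m ≤ (ν (Set.Ioi (x + δ))).toReal := by
        refine le_trans (min_le_right _ _)
          (ENNReal.toReal_mono (measure_ne_top ν _) (measure_mono ?_))
        exact Set.Ioi_subset_Ioi (by linarith)
      have hkey : Q + 1 ≤ P * Real.exp (-(a * δ)) := by
        have h5 := (Real.log_le_iff_le_exp hpos).1 haL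
        calc Q + 1 = (Q + 1) / P * P := by field_simp
          _ ≤ Real.exp (-(a * δ)) * P := mul_le_mul_of_nonneg_right h5 hP0.le
          _ = P * Real.exp (-(a * δ)) := by ring
      have hexpand : Real.exp (-Cc - Cg - a * δ)
          = Real.exp (-Cc - Cg) * Real.exp (-(a * δ)) := by rw [← Real.exp_add]; ring_nf
      have hchain : P * Real.exp (-(a * δ))
          ≤ δ * (ν (Set.Ioi (x + δ))).toReal * Real.exp (-Cc - Cg - a * δ) := by
        rw [hexpand, hP]
        calc δ * m * Real.exp (-Cc - Cg) * Real.exp (-(a * δ))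
            = (δ * (Real.exp (-Cc - Cg) * Real.exp (-(a * δ)))) * m := by ring
          _ ≤ (δ * (Real.exp (-Cc - Cg) * Real.exp (-(a * δ))))
              * (ν (Set.Ioi (x + δ))).toReal :=
            mul_le_mul_of_nonneg_left hmono (by positivity)
          _ = δ * (ν (Set.Ioi (x + δ))).toReal
              * (Real.exp (-Cc - Cg) * Real.exp (-(a * δ))) := by ring
      linarith

end Main
end

section
/- Let μ, ν, ρ be Borel probability measures on ℝ with μ and ν compactly supported, let |X| (resp. |Y|) denote the essential supremum of |x| under μ (resp. of |y| under ν), and let c : ℝ³ → ℝ be measurable. Fix C₀ > 0 and set κ = exp(−C₀). Let (f,g,h) and (f′,g′,h′) be measurable triples such that |c(x,y,z)+f(x)+g(y)+h(x)(y−x)| ≤ C₀ and |c(x,y,z)+f′(x)+g′(y)+h′(x)(y−x)| ≤ C₀ hold (μ⊗ν⊗ρ)-a.e. Define D_f(f,g,h)(x) = ∫ exp(−c(x,y,z)−f(x)−g(y)−h(x)(y−x)) d(ν⊗ρ) − 1, D_g(f,g,h)(y) = ∫ exp(−c(x,y,z)−f(x)−g(y)−h(x)(y−x)) d(μ⊗ρ)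 − 1, and D_h(f,g,h)(x) = ∫ (y−x)·exp(−c(x,y,z)−f(x)−g(y)−h(x)(y−x)) d(ν⊗ρ). Then, writing E² = ∫∫ |f′(x)−f(x)+g′(y)−g(y)+(h′(x)−h(x))(y−x)|² d(μ⊗ν), one has ‖D_f(f′,g′,h′) − D_f(f,g,h)‖²_{L²(μ)} ≤ κ^{−2}·E², ‖D_g(f′,g′,h′) − D_g(f,g,h)‖²_{L²(ν)} ≤ κ^{−2}·E², and ‖D_h(f′,g′,h′) − D_h(f,g,h)‖²_{L²(μ)} ≤ κ^{−2}·(|X|+|Y|)²·E². -/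
open MeasureTheory Filter Set

set_option linter.unusedTactic false
set_option linter.unusedVariables false

private lemma exp_lip {a b M : ℝ} (ha : |a| ≤ M) (hb : |b| ≤ M) :
    |Real.exp a - Real.exp b| ≤ Real.exp M * |a - b| := by
  wlog hab : b ≤ a generalizing a b
  · rw [abs_sub_comm, abs_sub_comm a b]; exact this hb ha (le_of_not_ge hab)
  have haM : a ≤ M := le_trans (le_abs_self a) ha
  have h1 : Real.exp a - Real.exp b ≤ Real.exp a * (a - b) := by
    have h2 := Real.add_one_le_exp (b - a)
    have h3 := Real.exp_pos a
    have h4 : Real.exp b = Real.exp a * Real.exp (b - a) := by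
      rw [← Real.exp_add]; ring_nf
    nlinarith
  have h5 : Real.exp a ≤ Real.exp M := Real.exp_le_exp.2 haM
  rw [abs_of_nonneg (sub_nonneg.2 (Real.exp_le_exp.2 hab)), abs_of_nonneg (sub_nonneg.2 hab)]
  nlinarith [Real.exp_pos a]

private lemma sq_integral_le {α : Type*} [MeasurableSpace α] {m : Measure α}
    [IsProbabilityMeasure m] {F : α → ℝ} (hF : AEStronglyMeasurable F m)
    {C : ℝ} (hC : ∀ᵐ a ∂m, |F a| ≤ C) :
    (∫ a, |F a| ∂m) ^ 2 ≤ ∫ a, (F a) ^ 2 ∂m := by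
  have hmem : MemLp (fun a => |F a|) 2 m :=
    MemLp.of_bound (by simpa [Real.norm_eq_abs] using hF.norm) C
      (hC.mono fun a ha => by simpa using ha)
  have h := ProbabilityTheory.variance_nonneg (fun a => |F a|) m
  rw [ProbabilityTheory.variance_eq_sub hmem] at h
  have h2 : ∫ a, ((fun a => |F a|) ^ 2) a ∂m = ∫ a, (F a) ^ 2 ∂m := by
    simp [sq_abs]
  rw [h2] at h
  linarith

private lemma main_est {m : Measure ℝ} {m2 : Measure (ℝ × ℝ)}
    [IsProbabilityMeasure m] [IsProbabilityMeasure m2]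
    {U U' w : ℝ × (ℝ × ℝ) → ℝ} (hU : Measurable U) (hU' : Measurable U')
    (hw : Measurable w) {C0 W : ℝ} (hC0 : 0 < C0) (hW : 0 ≤ W)
    (hbU : ∀ᵐ p ∂(m.prod m2), |U p| ≤ C0)
    (hbU' : ∀ᵐ p ∂(m.prod m2), |U' p| ≤ C0)
    (hbw : ∀ᵐ p ∂(m.prod m2), |w p| ≤ W) :
    ∫ x, ((∫ q, w (x, q) * Real.exp (-U' (x, q)) ∂m2)
        - ∫ q, w (x, q) * Real.exp (-U (x, q)) ∂m2) ^ 2 ∂m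
      ≤ Real.exp C0 ^ 2 * W ^ 2 * ∫ p, (U' p - U p) ^ 2 ∂(m.prod m2) := by
  set K := Real.exp C0 with hK
  have hK0 : 0 < K := Real.exp_pos _
  -- slice hypotheses
  have hae : ∀ᵐ x ∂m, ∀ᵐ q ∂m2,
      |U (x, q)| ≤ C0 ∧ |U' (x, q)| ≤ C0 ∧ |w (x, q)| ≤ W :=
    Measure.ae_ae_of_ae_prod (hbU.and (hbU'.and hbw))
  -- notation
  set e' : ℝ → (ℝ × ℝ) → ℝ := fun x q => w (x, q) * Real.exp (-U' (x, q)) with he'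
  set e : ℝ → (ℝ × ℝ) → ℝ := fun x q => w (x, q) * Real.exp (-U (x, q)) with he
  set D : ℝ → ℝ := fun x => (∫ q, e' x q ∂m2) - ∫ q, e x q ∂m2 with hD
  set G : ℝ → ℝ := fun x => ∫ q, (U' (x, q) - U (x, q)) ^ 2 ∂m2 with hG
  have hGnn : ∀ x, 0 ≤ G x := fun x => integral_nonneg fun q => sq_nonneg _
  -- measurability of slices
  have me' : ∀ x, Measurable (e' x) := fun x =>
    (hw.comp measurable_prodMk_left).mul
      ((hU'.comp measurable_prodMk_left).neg.exp)
  have me : ∀ x, Measurable (e x) := fun x =>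
    (hw.comp measurable_prodMk_left).mul
      ((hU.comp measurable_prodMk_left).neg.exp)
  have mΔ : Measurable (fun p : ℝ × (ℝ × ℝ) => (U' p - U p) ^ 2) := (hU'.sub hU).pow_const 2
  -- key pointwise estimate
  have key : ∀ᵐ x ∂m, D x ^ 2 ≤ K ^ 2 * W ^ 2 * G x ∧ |D x| ≤ K * W * (2 * C0)
      ∧ G x ≤ (2 * C0) ^ 2 := by
    filter_upwards [hae] with x hx
    have hie' : Integrable (e' x) m2 := by
      refine (integrable_const (W * K)).mono' (me' x).aestronglyMeasurable ?_
      filter_upwards [hx] with q hq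
      have h1 : Real.exp (-U' (x, q)) ≤ K := by
        apply Real.exp_le_exp.2; have := hq.2.1; rw [abs_le] at this; linarith [this.1]
      have h2 : |w (x, q)| ≤ W := hq.2.2
      rw [Real.norm_eq_abs, abs_mul, abs_of_pos (Real.exp_pos _)]
      exact mul_le_mul h2 h1 (Real.exp_pos _).le hW
    have hie : Integrable (e x) m2 := by
      refine (integrable_const (W * K)).mono' (me x).aestronglyMeasurable ?_
      filter_upwards [hx] with q hq
      have h1 : Real.exp (-U (x, q)) ≤ K := by
        apply Real.exp_le_exp.2; have := hq.1; rw [abs_le] at this; linarith [this.1]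
      rw [Real.norm_eq_abs, abs_mul, abs_of_pos (Real.exp_pos _)]
      exact mul_le_mul hq.2.2 h1 (Real.exp_pos _).le hW
    have hΔbd : ∀ᵐ q ∂m2, |U' (x, q) - U (x, q)| ≤ 2 * C0 := by
      filter_upwards [hx] with q hq
      have := abs_sub_abs_le_abs_sub (U' (x, q)) (U (x, q))
      calc |U' (x, q) - U (x, q)| ≤ |U' (x, q)| + |U (x, q)| := abs_sub _ _
        _ ≤ 2 * C0 := by linarith [hq.1, hq.2.1]
    have hiΔ : Integrable (fun q => K * W * |U' (x, q) - U (x, q)|) m2 := by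
      refine (integrable_const (K * W * (2 * C0))).mono'
        ((((hU'.comp measurable_prodMk_left).sub
          (hU.comp measurable_prodMk_left)).abs.const_mul _).aestronglyMeasurable) ?_
      filter_upwards [hΔbd] with q hq
      rw [Real.norm_eq_abs, abs_mul, abs_of_nonneg (by positivity : (0:ℝ) ≤ K * W), abs_abs]
      exact mul_le_mul_of_nonneg_left hq (by positivity)
    have hDle : |D x| ≤ K * W * ∫ q, |U' (x, q) - U (x, q)| ∂m2 := by
      rw [hD]
      simp only
      rw [← integral_sub hie' hie]
      calc |∫ q, (e' x q - e x q) ∂m2| ≤ ∫ q, |e' x q - e x q| ∂m2 := by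
            simpa [Real.norm_eq_abs] using
              norm_integral_le_integral_norm (fun q => e' x q - e x q)
        _ ≤ ∫ q, K * W * |U' (x, q) - U (x, q)| ∂m2 := by
            refine integral_mono_ae ((hie'.sub hie).abs) hiΔ ?_
            filter_upwards [hx] with q hq
            have h1 : |Real.exp (-U' (x, q)) - Real.exp (-U (x, q))|
                ≤ K * |U' (x, q) - U (x, q)| := by
              have hl := exp_lip (a := -U' (x, q)) (b := -U (x, q)) (M := C0)
                (by rw [abs_neg]; exact hq.2.1) (by rw [abs_neg]; exact hq.1)
              rw [show -U' (x, q) - -U (x, q) = -(U' (x, q) - U (x, q)) by ring,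
                abs_neg] at hl
              exact hl
            calc |e' x q - e x q|
                = |w (x, q)| * |Real.exp (-U' (x, q)) - Real.exp (-U (x, q))| := by
                  rw [he', he]; simp only; rw [← mul_sub, abs_mul]
              _ ≤ W * (K * |U' (x, q) - U (x, q)|) :=
                  mul_le_mul hq.2.2 h1 (abs_nonneg _) hW
              _ = K * W * |U' (x, q) - U (x, q)| := by ring
        _ = K * W * ∫ q, |U' (x, q) - U (x, q)| ∂m2 := integral_const_mul _ _
    have hintabs : ∫ q, |U' (x, q) - U (x, q)| ∂m2 ≤ 2 * C0 := by
      calc ∫ q, |U' (x, q) - U (x, q)| ∂m2 ≤ ∫ _q, (2 * C0) ∂m2 := by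
            refine integral_mono_ae ?_ (integrable_const _) hΔbd
            · refine (integrable_const (2 * C0)).mono'
                (((hU'.comp measurable_prodMk_left).sub
                  (hU.comp measurable_prodMk_left)).abs.aestronglyMeasurable) ?_
              filter_upwards [hΔbd] with q hq using by rwa [Real.norm_eq_abs, abs_abs]
        _ = 2 * C0 := by simp
    have habs_nn : 0 ≤ ∫ q, |U' (x, q) - U (x, q)| ∂m2 := integral_nonneg fun q => abs_nonneg _
    refine ⟨?_, ?_, ?_⟩
    · have hj : (∫ q, |U' (x, q) - U (x, q)| ∂m2) ^ 2 ≤ G x :=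
        sq_integral_le (((hU'.comp measurable_prodMk_left).sub
          (hU.comp measurable_prodMk_left)).aestronglyMeasurable) hΔbd
      calc D x ^ 2 ≤ (K * W * ∫ q, |U' (x, q) - U (x, q)| ∂m2) ^ 2 := by
            rw [← sq_abs (D x)]
            exact pow_le_pow_left₀ (abs_nonneg _) hDle 2
        _ = K ^ 2 * W ^ 2 * (∫ q, |U' (x, q) - U (x, q)| ∂m2) ^ 2 := by ring
        _ ≤ K ^ 2 * W ^ 2 * G x := by
            refine mul_le_mul_of_nonneg_left hj (by positivity)
    · exact le_trans hDle (mul_le_mul_of_nonneg_left hintabs (by positivity))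
    · have hGle : G x ≤ ∫ _q, (2 * C0) ^ 2 ∂m2 := by
        refine integral_mono_ae ?_ (integrable_const _) ?_
        · refine (integrable_const ((2 * C0) ^ 2)).mono'
            ((mΔ.comp measurable_prodMk_left).aestronglyMeasurable) ?_
          filter_upwards [hΔbd] with q hq
          rw [Real.norm_eq_abs, abs_of_nonneg (sq_nonneg _), ← sq_abs]
          exact pow_le_pow_left₀ (abs_nonneg _) hq 2
        · filter_upwards [hΔbd] with q hq
          rw [← sq_abs]
          exact pow_le_pow_left₀ (abs_nonneg _) hq 2
      simpa using hGle
  -- measurability of D and G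
  have mD : Measurable D := by
    have m1 : Measurable fun x => ∫ q, e' x q ∂m2 :=
      (hw.mul (hU'.neg.exp)).stronglyMeasurable.integral_prod_right'.measurable
    have m2' : Measurable fun x => ∫ q, e x q ∂m2 :=
      (hw.mul (hU.neg.exp)).stronglyMeasurable.integral_prod_right'.measurable
    exact m1.sub m2'
  have mG : Measurable G := mΔ.stronglyMeasurable.integral_prod_right'.measurable
  -- integrate the pointwise bound
  have hiD2 : Integrable (fun x => D x ^ 2) m := by
    refine (integrable_const ((K * W * (2 * C0)) ^ 2)).mono'
      ((mD.pow_const 2).aestronglyMeasurable) ?_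
    filter_upwards [key] with x hx
    rw [Real.norm_eq_abs, abs_of_nonneg (sq_nonneg _), ← sq_abs]
    exact pow_le_pow_left₀ (abs_nonneg _) hx.2.1 2
  have hiG : Integrable G m := by
    refine (integrable_const ((2 * C0) ^ 2)).mono' mG.aestronglyMeasurable ?_
    filter_upwards [key] with x hx
    rw [Real.norm_eq_abs, abs_of_nonneg (hGnn x)]
    exact hx.2.2
  have step1 : ∫ x, D x ^ 2 ∂m ≤ ∫ x, K ^ 2 * W ^ 2 * G x ∂m := by
    refine integral_mono_ae hiD2 (hiG.const_mul _) ?_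
    filter_upwards [key] with x hx using hx.1
  have hiΔP : Integrable (fun p : ℝ × (ℝ × ℝ) => (U' p - U p) ^ 2) (m.prod m2) := by
    refine (integrable_const ((2 * C0) ^ 2)).mono' mΔ.aestronglyMeasurable ?_
    filter_upwards [hbU.and hbU'] with p hp
    rw [Real.norm_eq_abs, abs_of_nonneg (sq_nonneg _), ← sq_abs]
    have : |U' p - U p| ≤ 2 * C0 := by
      calc |U' p - U p| ≤ |U' p| + |U p| := abs_sub _ _
        _ ≤ 2 * C0 := by linarith [hp.1, hp.2]
    exact pow_le_pow_left₀ (abs_nonneg _) this 2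
  have step2 : ∫ x, G x ∂m = ∫ p, (U' p - U p) ^ 2 ∂(m.prod m2) := by
    rw [hG]
    exact (integral_integral (f := fun x q => (U' (x, q) - U (x, q)) ^ 2) (by exact hiΔP))
  calc ∫ x, D x ^ 2 ∂m ≤ ∫ x, K ^ 2 * W ^ 2 * G x ∂m := step1
    _ = K ^ 2 * W ^ 2 * ∫ x, G x ∂m := integral_const_mul _ _
    _ = K ^ 2 * W ^ 2 * ∫ p, (U' p - U p) ^ 2 ∂(m.prod m2) := by rw [step2]


private lemma push1 (μ ν ρ : Measure ℝ) [IsProbabilityMeasure μ] [IsProbabilityMeasure ν]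
    [IsProbabilityMeasure ρ] {G : ℝ × ℝ → ℝ} (hG : Measurable G) :
    ∫ p : ℝ × ℝ × ℝ, G (p.1, p.2.1) ∂(μ.prod (ν.prod ρ)) = ∫ p, G p ∂(μ.prod ν) := by
  have hm : Measurable (fun p : ℝ × ℝ × ℝ => (p.1, p.2.1)) :=
    measurable_fst.prodMk (measurable_fst.comp measurable_snd)
  have hmap : (μ.prod (ν.prod ρ)).map (fun p : ℝ × ℝ × ℝ => (p.1, p.2.1)) = μ.prod ν := by
    have h1 : (fun p : ℝ × ℝ × ℝ => (p.1, p.2.1)) = Prod.map id Prod.fst := rfl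
    rw [h1, ← Measure.map_prod_map _ _ measurable_id measurable_fst, Measure.map_id,
      Measure.map_fst_prod]
    simp
  rw [← hmap, integral_map hm.aemeasurable hG.aestronglyMeasurable]

private lemma push2 (μ ν ρ : Measure ℝ) [IsProbabilityMeasure μ] [IsProbabilityMeasure ν]
    [IsProbabilityMeasure ρ] {G : ℝ × ℝ → ℝ} (hG : Measurable G) :
    ∫ p : ℝ × ℝ × ℝ, G (p.2.1, p.1) ∂(ν.prod (μ.prod ρ)) = ∫ p, G p ∂(μ.prod ν) := by
  have hm : Measurable (fun p : ℝ × ℝ × ℝ => (p.2.1, p.1)) :=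
    (measurable_fst.comp measurable_snd).prodMk measurable_fst
  have hmap : (ν.prod (μ.prod ρ)).map (fun p : ℝ × ℝ × ℝ => (p.2.1, p.1)) = μ.prod ν := by
    have h1 : (fun p : ℝ × ℝ × ℝ => (p.2.1, p.1)) = Prod.swap ∘ Prod.map id Prod.fst := rfl
    rw [h1, ← Measure.map_map measurable_swap (measurable_id.prodMap measurable_fst),
      ← Measure.map_prod_map _ _ measurable_id measurable_fst, Measure.map_id,
      Measure.map_fst_prod]
    simp [Measure.prod_swap]
  rw [← hmap, integral_map hm.aemeasurable hG.aestronglyMeasurable]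

private lemma sigma_mp (μ ν ρ : Measure ℝ) [IsProbabilityMeasure μ] [IsProbabilityMeasure ν]
    [IsProbabilityMeasure ρ] :
    MeasurePreserving (fun p : ℝ × ℝ × ℝ => (p.2.1, (p.1, p.2.2)))
      (ν.prod (μ.prod ρ)) (μ.prod (ν.prod ρ)) := by
  have h1 := MeasurePreserving.symm _ (measurePreserving_prodAssoc ν μ ρ)
  have h2 : MeasurePreserving (Prod.map Prod.swap id) ((ν.prod μ).prod ρ)
      ((μ.prod ν).prod ρ) := Measure.measurePreserving_swap.prod (MeasurePreserving.id ρ)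
  have h3 := measurePreserving_prodAssoc μ ν ρ
  exact (h3.comp h2).comp h1

/-- Functional derivative of the dual functional `G` in `f`. -/
noncomputable def Df (ν ρ : Measure ℝ) (c : ℝ × ℝ × ℝ → ℝ) (f g h : ℝ → ℝ) (x : ℝ) : ℝ :=
  (∫ q : ℝ × ℝ, Real.exp (-c (x, q.1, q.2) - f x - g q.1 - h x * (q.1 - x)) ∂(ν.prod ρ)) - 1

/-- Functional derivative of the dual functional `G` in `g`. -/
noncomputable def Dg (μ ρ : Measure ℝ) (c : ℝ × ℝ × ℝ → ℝ) (f g h : ℝ → ℝ) (y : ℝ) : ℝ :=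
  (∫ q : ℝ × ℝ, Real.exp (-c (q.1, y, q.2) - f q.1 - g y - h q.1 * (y - q.1)) ∂(μ.prod ρ)) - 1

/-- Functional derivative of the dual functional `G` in `h`. -/
noncomputable def Dh (ν ρ : Measure ℝ) (c : ℝ × ℝ × ℝ → ℝ) (f g h : ℝ → ℝ) (x : ℝ) : ℝ :=
  ∫ q : ℝ × ℝ,
    (q.1 - x) * Real.exp (-c (x, q.1, q.2) - f x - g q.1 - h x * (q.1 - x)) ∂(ν.prod ρ)

theorem stmt_10
    (μ ν ρ : Measure ℝ)
    [IsProbabilityMeasure μ] [IsProbabilityMeasure ν] [IsProbabilityMeasure ρ]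
    (A B : ℝ) (hA : ∀ᵐ x ∂μ, |x| ≤ A) (hB : ∀ᵐ y ∂ν, |y| ≤ B)
    (c : ℝ × ℝ × ℝ → ℝ) (hcm : Measurable c)
    (C0 : ℝ) (hC0 : 0 < C0)
    (f g h f' g' h' : ℝ → ℝ)
    (hfm : Measurable f) (hgm : Measurable g) (hhm : Measurable h)
    (hfm' : Measurable f') (hgm' : Measurable g') (hhm' : Measurable h')
    (hbd : ∀ᵐ p ∂(μ.prod (ν.prod ρ)),
      |c p + f p.1 + g p.2.1 + h p.1 * (p.2.1 - p.1)| ≤ C0)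
    (hbd' : ∀ᵐ p ∂(μ.prod (ν.prod ρ)),
      |c p + f' p.1 + g' p.2.1 + h' p.1 * (p.2.1 - p.1)| ≤ C0) :
    (∫ x, (Df ν ρ c f' g' h' x - Df ν ρ c f g h x) ^ 2 ∂μ
        ≤ (Real.exp (-C0))⁻¹ ^ 2
          * ∫ p : ℝ × ℝ, (f' p.1 - f p.1 + (g' p.2 - g p.2)
              + (h' p.1 - h p.1) * (p.2 - p.1)) ^ 2 ∂(μ.prod ν)) ∧
    (∫ y, (Dg μ ρ c f' g' h' y - Dg μ ρ c f g h y) ^ 2 ∂ν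
        ≤ (Real.exp (-C0))⁻¹ ^ 2
          * ∫ p : ℝ × ℝ, (f' p.1 - f p.1 + (g' p.2 - g p.2)
              + (h' p.1 - h p.1) * (p.2 - p.1)) ^ 2 ∂(μ.prod ν)) ∧
    (∫ x, (Dh ν ρ c f' g' h' x - Dh ν ρ c f g h x) ^ 2 ∂μ
        ≤ (Real.exp (-C0))⁻¹ ^ 2 * (A + B) ^ 2
          * ∫ p : ℝ × ℝ, (f' p.1 - f p.1 + (g' p.2 - g p.2)
              + (h' p.1 - h p.1) * (p.2 - p.1)) ^ 2 ∂(μ.prod ν)) := by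
  have hconst : ((Real.exp (-C0))⁻¹ : ℝ) = Real.exp C0 := by rw [Real.exp_neg, inv_inv]
  set K := Real.exp C0 with hK
  -- the common RHS integrand
  set G0 : ℝ × ℝ → ℝ := fun p => (f' p.1 - f p.1 + (g' p.2 - g p.2)
      + (h' p.1 - h p.1) * (p.2 - p.1)) ^ 2 with hG0
  have mG0 : Measurable G0 := by
    apply Measurable.pow_const
    exact (((hfm'.comp measurable_fst).sub (hfm.comp measurable_fst)).add
      ((hgm'.comp measurable_snd).sub (hgm.comp measurable_snd))).add
      (((hhm'.comp measurable_fst).sub (hhm.comp measurable_fst)).mul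
        (measurable_snd.sub measurable_fst))
  -- the U functions for the Df / Dh parts
  set U1 : ℝ × ℝ × ℝ → ℝ := fun p => c p + f p.1 + g p.2.1 + h p.1 * (p.2.1 - p.1) with hU1
  set U1' : ℝ × ℝ × ℝ → ℝ := fun p => c p + f' p.1 + g' p.2.1 + h' p.1 * (p.2.1 - p.1)
    with hU1'
  have mU1 : Measurable U1 :=
    ((hcm.add (hfm.comp measurable_fst)).add
      (hgm.comp (measurable_fst.comp measurable_snd))).add
      ((hhm.comp measurable_fst).mul
        ((measurable_fst.comp measurable_snd).sub measurable_fst))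
  have mU1' : Measurable U1' :=
    ((hcm.add (hfm'.comp measurable_fst)).add
      (hgm'.comp (measurable_fst.comp measurable_snd))).add
      ((hhm'.comp measurable_fst).mul
        ((measurable_fst.comp measurable_snd).sub measurable_fst))
  have hbU1 : ∀ᵐ p ∂(μ.prod (ν.prod ρ)), |U1 p| ≤ C0 := hbd
  have hbU1' : ∀ᵐ p ∂(μ.prod (ν.prod ρ)), |U1' p| ≤ C0 := hbd'
  -- RHS identification for parts 1 and 3
  have hRHS1 : ∫ p, (U1' p - U1 p) ^ 2 ∂(μ.prod (ν.prod ρ)) = ∫ p, G0 p ∂(μ.prod ν) := by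
    rw [← push1 μ ν ρ mG0]
    refine integral_congr_ae (Eventually.of_forall fun p => ?_)
    simp only [hU1, hU1', hG0]
    ring
  refine ⟨?_, ?_, ?_⟩
  · -- Df part
    have H := main_est (m := μ) (m2 := ν.prod ρ) (w := fun _ => (1:ℝ)) (W := 1) mU1 mU1' measurable_const hC0
      (zero_le_one) hbU1 hbU1' (Eventually.of_forall fun p => by norm_num)
    have eq1 : ∀ x : ℝ, Df ν ρ c f' g' h' x - Df ν ρ c f g h x
        = (∫ q : ℝ × ℝ, (1 : ℝ) * Real.exp (-U1' (x, q)) ∂(ν.prod ρ))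
          - ∫ q : ℝ × ℝ, (1 : ℝ) * Real.exp (-U1 (x, q)) ∂(ν.prod ρ) := by
      intro x
      have a1 : (∫ q : ℝ × ℝ,
          Real.exp (-c (x, q.1, q.2) - f' x - g' q.1 - h' x * (q.1 - x)) ∂(ν.prod ρ))
          = ∫ q : ℝ × ℝ, (1 : ℝ) * Real.exp (-U1' (x, q)) ∂(ν.prod ρ) := by
        refine integral_congr_ae (Eventually.of_forall fun q => ?_)
        simp only [one_mul]; congr 1; simp only [hU1']; ring
      have a2 : (∫ q : ℝ × ℝ,
          Real.exp (-c (x, q.1, q.2) - f x - g q.1 - h x * (q.1 - x)) ∂(ν.prod ρ))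
          = ∫ q : ℝ × ℝ, (1 : ℝ) * Real.exp (-U1 (x, q)) ∂(ν.prod ρ) := by
        refine integral_congr_ae (Eventually.of_forall fun q => ?_)
        simp only [one_mul]; congr 1; simp only [hU1]; ring
      simp only [Df]
      rw [a1, a2]; ring
    calc ∫ x, (Df ν ρ c f' g' h' x - Df ν ρ c f g h x) ^ 2 ∂μ
        = ∫ x, ((∫ q : ℝ × ℝ, (1 : ℝ) * Real.exp (-U1' (x, q)) ∂(ν.prod ρ))
            - ∫ q : ℝ × ℝ, (1 : ℝ) * Real.exp (-U1 (x, q)) ∂(ν.prod ρ)) ^ 2 ∂μ := by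
          simp only [eq1]
      _ ≤ K ^ 2 * 1 ^ 2 * ∫ p, (U1' p - U1 p) ^ 2 ∂(μ.prod (ν.prod ρ)) := H
      _ = (Real.exp (-C0))⁻¹ ^ 2 * ∫ p, G0 p ∂(μ.prod ν) := by
          rw [hRHS1, hconst]; ring
  · -- Dg part
    have hσ := sigma_mp μ ν ρ
    set U2 : ℝ × ℝ × ℝ → ℝ := fun p => c (p.2.1, p.1, p.2.2) + f p.2.1 + g p.1
        + h p.2.1 * (p.1 - p.2.1) with hU2
    set U2' : ℝ × ℝ × ℝ → ℝ := fun p => c (p.2.1, p.1, p.2.2) + f' p.2.1 + g' p.1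
        + h' p.2.1 * (p.1 - p.2.1) with hU2'
    have mσ : Measurable (fun p : ℝ × ℝ × ℝ => ((p.2.1, p.1, p.2.2) : ℝ × ℝ × ℝ)) :=
      hσ.measurable
    have mU2 : Measurable U2 :=
      ((((hcm.comp mσ).add (hfm.comp (measurable_fst.comp measurable_snd)))).add
        (hgm.comp measurable_fst)).add
        ((hhm.comp (measurable_fst.comp measurable_snd)).mul
          (measurable_fst.sub (measurable_fst.comp measurable_snd)))
    have mU2' : Measurable U2' :=
      ((((hcm.comp mσ).add (hfm'.comp (measurable_fst.comp measurable_snd)))).add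
        (hgm'.comp measurable_fst)).add
        ((hhm'.comp (measurable_fst.comp measurable_snd)).mul
          (measurable_fst.sub (measurable_fst.comp measurable_snd)))
    have hbU2 : ∀ᵐ p ∂(ν.prod (μ.prod ρ)), |U2 p| ≤ C0 := by
      have h0 := ae_of_ae_map hσ.aemeasurable (by rw [hσ.map_eq]; exact hbd)
      filter_upwards [h0] with p hp using hp
    have hbU2' : ∀ᵐ p ∂(ν.prod (μ.prod ρ)), |U2' p| ≤ C0 := by
      have h0 := ae_of_ae_map hσ.aemeasurable (by rw [hσ.map_eq]; exact hbd')
      filter_upwards [h0] with p hp using hp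
    have H := main_est (m := ν) (m2 := μ.prod ρ) (w := fun _ => (1:ℝ)) (W := 1)
      mU2 mU2' measurable_const hC0 zero_le_one hbU2 hbU2'
      (Eventually.of_forall fun p => by norm_num)
    have hRHS2 : ∫ p, (U2' p - U2 p) ^ 2 ∂(ν.prod (μ.prod ρ)) = ∫ p, G0 p ∂(μ.prod ν) := by
      rw [← push2 μ ν ρ mG0]
      refine integral_congr_ae (Eventually.of_forall fun p => ?_)
      simp only [hU2, hU2', hG0]
      ring
    have eq2 : ∀ y : ℝ, Dg μ ρ c f' g' h' y - Dg μ ρ c f g h y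
        = (∫ q : ℝ × ℝ, (1 : ℝ) * Real.exp (-U2' (y, q)) ∂(μ.prod ρ))
          - ∫ q : ℝ × ℝ, (1 : ℝ) * Real.exp (-U2 (y, q)) ∂(μ.prod ρ) := by
      intro y
      have a1 : (∫ q : ℝ × ℝ,
          Real.exp (-c (q.1, y, q.2) - f' q.1 - g' y - h' q.1 * (y - q.1)) ∂(μ.prod ρ))
          = ∫ q : ℝ × ℝ, (1 : ℝ) * Real.exp (-U2' (y, q)) ∂(μ.prod ρ) := by
        refine integral_congr_ae (Eventually.of_forall fun q => ?_)
        simp only [one_mul]; congr 1; simp only [hU2']; ring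
      have a2 : (∫ q : ℝ × ℝ,
          Real.exp (-c (q.1, y, q.2) - f q.1 - g y - h q.1 * (y - q.1)) ∂(μ.prod ρ))
          = ∫ q : ℝ × ℝ, (1 : ℝ) * Real.exp (-U2 (y, q)) ∂(μ.prod ρ) := by
        refine integral_congr_ae (Eventually.of_forall fun q => ?_)
        simp only [one_mul]; congr 1; simp only [hU2]; ring
      simp only [Dg]
      rw [a1, a2]; ring
    calc ∫ y, (Dg μ ρ c f' g' h' y - Dg μ ρ c f g h y) ^ 2 ∂ν
        = ∫ y, ((∫ q : ℝ × ℝ, (1 : ℝ) * Real.exp (-U2' (y, q)) ∂(μ.prod ρ))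
            - ∫ q : ℝ × ℝ, (1 : ℝ) * Real.exp (-U2 (y, q)) ∂(μ.prod ρ)) ^ 2 ∂ν := by
          simp only [eq2]
      _ ≤ K ^ 2 * 1 ^ 2 * ∫ p, (U2' p - U2 p) ^ 2 ∂(ν.prod (μ.prod ρ)) := H
      _ = (Real.exp (-C0))⁻¹ ^ 2 * ∫ p, G0 p ∂(μ.prod ν) := by
          rw [hRHS2, hconst]; ring
  · -- Dh part
    have hAB : 0 ≤ A + B := by
      have hμ : (ae μ).NeBot := ae_neBot.2 (IsProbabilityMeasure.ne_zero μ)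
      have hν : (ae ν).NeBot := ae_neBot.2 (IsProbabilityMeasure.ne_zero ν)
      obtain ⟨x, hx⟩ := hA.exists
      obtain ⟨y, hy⟩ := hB.exists
      have := abs_nonneg x; have := abs_nonneg y; linarith
    have hmfst : (μ.prod (ν.prod ρ)).map Prod.fst = μ := by simp
    have hA' : ∀ᵐ p ∂(μ.prod (ν.prod ρ)), |p.1| ≤ A :=
      ae_of_ae_map measurable_fst.aemeasurable (by rw [hmfst]; exact hA)
    have hm21 : (μ.prod (ν.prod ρ)).map (Prod.fst ∘ Prod.snd) = ν := by
      rw [← Measure.map_map measurable_fst measurable_snd]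
      simp
    have hB' : ∀ᵐ p ∂(μ.prod (ν.prod ρ)), |p.2.1| ≤ B := by
      have h0 := ae_of_ae_map (f := Prod.fst ∘ Prod.snd)
        (measurable_fst.comp measurable_snd).aemeasurable (by rw [hm21]; exact hB)
      filter_upwards [h0] with p hp using hp
    have hbw : ∀ᵐ p ∂(μ.prod (ν.prod ρ)), |p.2.1 - p.1| ≤ A + B := by
      filter_upwards [hA', hB'] with p h1 h2
      calc |p.2.1 - p.1| ≤ |p.2.1| + |p.1| := abs_sub _ _
        _ ≤ A + B := by linarith
    have H := main_est (m := μ) (m2 := ν.prod ρ)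
      (w := fun p : ℝ × ℝ × ℝ => p.2.1 - p.1) (W := A + B) mU1 mU1'
      ((measurable_fst.comp measurable_snd).sub measurable_fst) hC0 hAB hbU1 hbU1' hbw
    have eq3 : ∀ x : ℝ, Dh ν ρ c f' g' h' x - Dh ν ρ c f g h x
        = (∫ q : ℝ × ℝ, (q.1 - x) * Real.exp (-U1' (x, q)) ∂(ν.prod ρ))
          - ∫ q : ℝ × ℝ, (q.1 - x) * Real.exp (-U1 (x, q)) ∂(ν.prod ρ) := by
      intro x
      have a1 : (∫ q : ℝ × ℝ, (q.1 - x) *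
          Real.exp (-c (x, q.1, q.2) - f' x - g' q.1 - h' x * (q.1 - x)) ∂(ν.prod ρ))
          = ∫ q : ℝ × ℝ, (q.1 - x) * Real.exp (-U1' (x, q)) ∂(ν.prod ρ) := by
        refine integral_congr_ae (Eventually.of_forall fun q => ?_)
        congr 1; congr 1; simp only [hU1']; ring
      have a2 : (∫ q : ℝ × ℝ, (q.1 - x) *
          Real.exp (-c (x, q.1, q.2) - f x - g q.1 - h x * (q.1 - x)) ∂(ν.prod ρ))
          = ∫ q : ℝ × ℝ, (q.1 - x) * Real.exp (-U1 (x, q)) ∂(ν.prod ρ) := by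
        refine integral_congr_ae (Eventually.of_forall fun q => ?_)
        congr 1; congr 1; simp only [hU1]; ring
      simp only [Dh]
      rw [a1, a2]
    calc ∫ x, (Dh ν ρ c f' g' h' x - Dh ν ρ c f g h x) ^ 2 ∂μ
        = ∫ x, ((∫ q : ℝ × ℝ, (q.1 - x) * Real.exp (-U1' (x, q)) ∂(ν.prod ρ))
            - ∫ q : ℝ × ℝ, (q.1 - x) * Real.exp (-U1 (x, q)) ∂(ν.prod ρ)) ^ 2 ∂μ := by
          simp only [eq3]
      _ ≤ K ^ 2 * (A + B) ^ 2 * ∫ p, (U1' p - U1 p) ^ 2 ∂(μ.prod (ν.prod ρ)) := H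
      _ = (Real.exp (-C0))⁻¹ ^ 2 * (A + B) ^ 2 * ∫ p, G0 p ∂(μ.prod ν) := by
          rw [hRHS1, hconst]
end

section
/- Let μ, ν, ρ be Borel probability measures on ℝ with μ and ν compactly supported, and let c : ℝ³ → ℝ be bounded measurable. Then the dual functional G is concave on bounded triples: for all f, h, f′, h′ ∈ L∞(μ), g, g′ ∈ L∞(ν), the map φ(t) = G(t·f′+(1−t)·f, t·g′+(1−t)·g, t·h′+(1−t)·h) is concave on [0,1]; in fact φ is twice differentiable on (0,1) with φ″(t) = −∫ |f′(x)−f(x)+g′(y)−g(y)+(h′(x)−h(x))(y−x)|² dπ(fᵗ,gᵗ,hᵗ), where (fᵗ,gᵗ,hᵗ) = (t·f′+(1−t)·f, t·g′+(1−t)·g, t·h′+(1−t)·h). -/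
open MeasureTheory Filter Set

/-- `f` is (essentially) bounded and measurable, i.e. a representative of an `L∞(μ)` class. -/
def MemLinf (μ : Measure ℝ) (f : ℝ → ℝ) : Prop :=
  Measurable f ∧ ∃ C : ℝ, ∀ᵐ x ∂μ, |f x| ≤ C

/-- The dual functional `G(f,g,h) = -Z(f,g,h) - ∫ f dμ - ∫ g dν`. -/
noncomputable def Gfun (μ ν ρ : Measure ℝ) (c : ℝ × ℝ × ℝ → ℝ) (f g h : ℝ → ℝ) : ℝ :=
  -(∫ q, Real.exp (-c q - f q.1 - g q.2.1 - h q.1 * (q.2.1 - q.1)) ∂(μ.prod (ν.prod ρ)))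
    - ∫ x, f x ∂μ - ∫ y, g y ∂ν

lemma ae_mem_msupp' (ν : Measure ℝ) : ∀ᵐ x ∂ν, x ∈ msupp ν := by
  rw [ae_iff]
  apply measure_null_of_locally_null
  intro x hx
  simp only [msupp, mem_setOf_eq, not_forall] at hx
  obtain ⟨U, hU, hU0⟩ := hx
  exact ⟨U, nhdsWithin_le_nhds hU, le_zero_iff.1 (not_lt.1 hU0)⟩

lemma aux_int {α : Type*} [MeasurableSpace α] (π : Measure α) [IsProbabilityMeasure π]
    (A B : α → ℝ) (hA : Measurable A) (hB : Measurable B)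
    (C D : ℝ) (hCA : ∀ᵐ p ∂π, |A p| ≤ C) (hCB : ∀ᵐ p ∂π, |B p| ≤ D)
    (n : ℕ) (t : ℝ) :
    Integrable (fun p => (-A p) ^ n * Real.exp (B p - t * A p)) π := by
  set C' := max C 0 with hC'
  set D' := max D 0 with hD'
  have hC0 : (0:ℝ) ≤ C' := le_max_right _ _
  have hmeas : Measurable fun p => (-A p) ^ n * Real.exp (B p - t * A p) :=
    (hA.neg.pow_const n).mul ((hB.sub (hA.const_mul t)).exp)
  apply Integrable.mono' (integrable_const (C' ^ n * Real.exp (D' + |t| * C')))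
    hmeas.aestronglyMeasurable
  filter_upwards [hCA, hCB] with p hpA hpB
  have hpA' : |A p| ≤ C' := hpA.trans (le_max_left _ _)
  have hpB' : |B p| ≤ D' := hpB.trans (le_max_left _ _)
  have h1 : |(-A p) ^ n| = |A p| ^ n := by rw [abs_pow, abs_neg]
  have h2 : B p - t * A p ≤ D' + |t| * C' := by
    have : |t * A p| ≤ |t| * C' := by
      rw [abs_mul]; exact mul_le_mul_of_nonneg_left hpA' (abs_nonneg t)
    have := abs_le.1 this
    have := abs_le.1 hpB'
    linarith
  calc ‖(-A p) ^ n * Real.exp (B p - t * A p)‖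
      = |A p| ^ n * Real.exp (B p - t * A p) := by
        rw [Real.norm_eq_abs, abs_mul, h1, abs_of_pos (Real.exp_pos _)]
    _ ≤ C' ^ n * Real.exp (D' + |t| * C') := by
        exact mul_le_mul (pow_le_pow_left₀ (abs_nonneg _) hpA' n)
          (Real.exp_le_exp.2 h2) (Real.exp_pos _).le (pow_nonneg hC0 n)

lemma aux_deriv {α : Type*} [MeasurableSpace α] (π : Measure α) [IsProbabilityMeasure π]
    (A B : α → ℝ) (hA : Measurable A) (hB : Measurable B)
    (C D : ℝ) (hCA : ∀ᵐ p ∂π, |A p| ≤ C) (hCB : ∀ᵐ p ∂π, |B p| ≤ D)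
    (n : ℕ) (t₀ : ℝ) :
    HasDerivAt (fun t => ∫ p, (-A p) ^ n * Real.exp (B p - t * A p) ∂π)
      (∫ p, (-A p) ^ (n + 1) * Real.exp (B p - t₀ * A p) ∂π) t₀ := by
  set C' := max C 0 with hC'
  set D' := max D 0 with hD'
  have hC0 : (0:ℝ) ≤ C' := le_max_right _ _
  have hmeas : ∀ m : ℕ, ∀ t : ℝ,
      Measurable fun p => (-A p) ^ m * Real.exp (B p - t * A p) := fun m t =>
    (hA.neg.pow_const m).mul ((hB.sub (hA.const_mul t)).exp)
  refine (hasDerivAt_integral_of_dominated_loc_of_deriv_le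
    (F := fun t p => (-A p) ^ n * Real.exp (B p - t * A p))
    (F' := fun t p => (-A p) ^ (n + 1) * Real.exp (B p - t * A p))
    (bound := fun _ => C' ^ (n + 1) * Real.exp (D' + (|t₀| + 1) * C'))
    (Metric.ball_mem_nhds t₀ one_pos) ?_ ?_ ?_ ?_ ?_ ?_).2
  · exact Eventually.of_forall fun t => (hmeas n t).aestronglyMeasurable
  · exact aux_int π A B hA hB C D hCA hCB n t₀
  · exact (hmeas (n + 1) t₀).aestronglyMeasurable
  · filter_upwards [hCA, hCB] with p hpA hpB
    intro t ht
    have hpA' : |A p| ≤ C' := hpA.trans (le_max_left _ _)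
    have hpB' : |B p| ≤ D' := hpB.trans (le_max_left _ _)
    have htb : |t| ≤ |t₀| + 1 := by
      have := mem_ball_iff_norm.1 ht
      rw [Real.norm_eq_abs] at this
      have := abs_le.1 this.le
      cases abs_cases t₀ <;> cases abs_cases t <;> linarith [abs_nonneg t₀]
    have h2 : B p - t * A p ≤ D' + (|t₀| + 1) * C' := by
      have h3 : |t * A p| ≤ (|t₀| + 1) * C' := by
        rw [abs_mul]
        exact mul_le_mul htb hpA' (abs_nonneg _) (by linarith [abs_nonneg t₀])
      have := abs_le.1 h3
      have := abs_le.1 hpB'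
      linarith
    calc ‖(-A p) ^ (n+1) * Real.exp (B p - t * A p)‖
        = |A p| ^ (n+1) * Real.exp (B p - t * A p) := by
          rw [Real.norm_eq_abs, abs_mul, abs_pow, abs_neg, abs_of_pos (Real.exp_pos _)]
      _ ≤ C' ^ (n+1) * Real.exp (D' + (|t₀| + 1) * C') :=
          mul_le_mul (pow_le_pow_left₀ (abs_nonneg _) hpA' _)
            (Real.exp_le_exp.2 h2) (Real.exp_pos _).le (pow_nonneg hC0 _)
  · exact integrable_const _
  · refine Eventually.of_forall fun p => ?_
    intro t _
    have h1 : HasDerivAt (fun t : ℝ => B p - t * A p) (-(A p)) t := by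
      simpa using ((hasDerivAt_id t).mul_const (A p)).const_sub (B p)
    have h3 := (h1.exp).const_mul ((-A p) ^ n)
    exact h3.congr_deriv (by ring)

theorem stmt_11
    (μ ν ρ : Measure ℝ)
    [IsProbabilityMeasure μ] [IsProbabilityMeasure ν] [IsProbabilityMeasure ρ]
    (hμc : IsCompact (msupp μ)) (hνc : IsCompact (msupp ν))
    (c : ℝ × ℝ × ℝ → ℝ) (Cc : ℝ) (hcm : Measurable c) (hcb : ∀ p, |c p| ≤ Cc)
    (f h f' h' g g' : ℝ → ℝ)
    (hf : MemLinf μ f) (hh : MemLinf μ h) (hf' : MemLinf μ f') (hh' : MemLinf μ h')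
    (hg : MemLinf ν g) (hg' : MemLinf ν g')
    (φ : ℝ → ℝ)
    (hφ : ∀ t : ℝ, φ t = Gfun μ ν ρ c
        (fun x => t * f' x + (1 - t) * f x)
        (fun y => t * g' y + (1 - t) * g y)
        (fun x => t * h' x + (1 - t) * h x)) :
    ConcaveOn ℝ (Set.Icc 0 1) φ ∧
    ∃ φd : ℝ → ℝ,
      (∀ t ∈ Set.Ioo (0 : ℝ) 1, HasDerivAt φ (φd t) t) ∧
      (∀ t ∈ Set.Ioo (0 : ℝ) 1, HasDerivAt φd
        (-(∫ p, (f' p.1 - f p.1 + (g' p.2.1 - g p.2.1)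
              + (h' p.1 - h p.1) * (p.2.1 - p.1)) ^ 2
            * Real.exp (-c p - (t * f' p.1 + (1 - t) * f p.1)
              - (t * g' p.2.1 + (1 - t) * g p.2.1)
              - (t * h' p.1 + (1 - t) * h p.1) * (p.2.1 - p.1))
            ∂(μ.prod (ν.prod ρ)))) t) := by
  obtain ⟨hfm, Cf, hfb⟩ := hf
  obtain ⟨hhm, Ch, hhb⟩ := hh
  obtain ⟨hf'm, Cf', hf'b⟩ := hf'
  obtain ⟨hh'm, Ch', hh'b⟩ := hh'
  obtain ⟨hgm, Cg, hgb⟩ := hg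
  obtain ⟨hg'm, Cg', hg'b⟩ := hg'
  -- supports are bounded
  obtain ⟨Rμ, hRμ⟩ := hμc.isBounded.subset_closedBall 0
  obtain ⟨Rν, hRν⟩ := hνc.isBounded.subset_closedBall 0
  have hμR : ∀ᵐ x ∂μ, |x| ≤ Rμ := by
    filter_upwards [ae_mem_msupp' μ] with x hx
    simpa [Real.dist_eq] using hRμ hx
  have hνR : ∀ᵐ y ∂ν, |y| ≤ Rν := by
    filter_upwards [ae_mem_msupp' ν] with y hy
    simpa [Real.dist_eq] using hRν hy
  set π := μ.prod (ν.prod ρ) with hπ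
  set A : ℝ × ℝ × ℝ → ℝ := fun p =>
    f' p.1 - f p.1 + (g' p.2.1 - g p.2.1) + (h' p.1 - h p.1) * (p.2.1 - p.1) with hAdef
  set B : ℝ × ℝ × ℝ → ℝ := fun p =>
    -c p - f p.1 - g p.2.1 - h p.1 * (p.2.1 - p.1) with hBdef
  have hm1 : Measurable fun p : ℝ × ℝ × ℝ => p.1 := measurable_fst
  have hm2 : Measurable fun p : ℝ × ℝ × ℝ => p.2.1 := measurable_fst.comp measurable_snd
  have hAm : Measurable A := by
    apply Measurable.add
    apply Measurable.add
    · exact (hf'm.comp hm1).sub (hfm.comp hm1)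
    · exact (hg'm.comp hm2).sub (hgm.comp hm2)
    · exact ((hh'm.comp hm1).sub (hhm.comp hm1)).mul (hm2.sub hm1)
  have hBm : Measurable B := by
    apply Measurable.sub
    apply Measurable.sub
    apply Measurable.sub
    · exact hcm.neg
    · exact hfm.comp hm1
    · exact hgm.comp hm2
    · exact (hhm.comp hm1).mul (hm2.sub hm1)
  -- a.e. bounds on the product
  have hμall : ∀ᵐ x ∂μ, |f x| ≤ Cf ∧ |f' x| ≤ Cf' ∧ |h x| ≤ Ch ∧ |h' x| ≤ Ch' ∧ |x| ≤ Rμ := by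
    filter_upwards [hfb, hf'b, hhb, hh'b, hμR] with x a b c d e
    exact ⟨a, b, c, d, e⟩
  have hνall : ∀ᵐ y ∂ν, |g y| ≤ Cg ∧ |g' y| ≤ Cg' ∧ |y| ≤ Rν := by
    filter_upwards [hgb, hg'b, hνR] with y a b c
    exact ⟨a, b, c⟩
  have hπ1 : ∀ᵐ p ∂π, |f p.1| ≤ Cf ∧ |f' p.1| ≤ Cf' ∧ |h p.1| ≤ Ch ∧ |h' p.1| ≤ Ch'
      ∧ |p.1| ≤ Rμ := Measure.quasiMeasurePreserving_fst.ae hμall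
  have hπ2 : ∀ᵐ p ∂π, |g p.2.1| ≤ Cg ∧ |g' p.2.1| ≤ Cg' ∧ |p.2.1| ≤ Rν :=
    (Measure.quasiMeasurePreserving_fst.comp Measure.quasiMeasurePreserving_snd).ae hνall
  set CA : ℝ := Cf' + Cf + (Cg' + Cg) + (Ch' + Ch) * (Rν + Rμ) with hCAdef
  set CB : ℝ := Cc + Cf + Cg + Ch * (Rν + Rμ) with hCBdef
  have hCAb : ∀ᵐ p ∂π, |A p| ≤ CA := by
    filter_upwards [hπ1, hπ2] with p hp1 hp2
    obtain ⟨e1, e2, e3, e4, e5⟩ := hp1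
    obtain ⟨e6, e7, e8⟩ := hp2
    have k1 : |A p| ≤ |f' p.1 - f p.1| + |g' p.2.1 - g p.2.1|
        + |h' p.1 - h p.1| * |p.2.1 - p.1| := by
      calc |A p| ≤ |f' p.1 - f p.1 + (g' p.2.1 - g p.2.1)|
            + |(h' p.1 - h p.1) * (p.2.1 - p.1)| := abs_add_le _ _
        _ ≤ _ := by
            rw [abs_mul]
            exact add_le_add_left (abs_add_le _ _) _
    have k2 : |f' p.1 - f p.1| ≤ Cf' + Cf := (abs_sub _ _).trans (add_le_add e2 e1)
    have k3 : |g' p.2.1 - g p.2.1| ≤ Cg' + Cg := (abs_sub _ _).trans (add_le_add e7 e6)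
    have k4 : |h' p.1 - h p.1| ≤ Ch' + Ch := (abs_sub _ _).trans (add_le_add e4 e3)
    have k5 : |p.2.1 - p.1| ≤ Rν + Rμ := (abs_sub _ _).trans (add_le_add e8 e5)
    have k6 : |h' p.1 - h p.1| * |p.2.1 - p.1| ≤ (Ch' + Ch) * (Rν + Rμ) :=
      mul_le_mul k4 k5 (abs_nonneg _) ((abs_nonneg _).trans k4)
    rw [hCAdef]; linarith
  have hCBb : ∀ᵐ p ∂π, |B p| ≤ CB := by
    filter_upwards [hπ1, hπ2] with p hp1 hp2
    obtain ⟨e1, e2, e3, e4, e5⟩ := hp1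
    obtain ⟨e6, e7, e8⟩ := hp2
    have k1 : |B p| ≤ |c p| + |f p.1| + |g p.2.1| + |h p.1| * |p.2.1 - p.1| := by
      calc |B p| ≤ |(-c p - f p.1 - g p.2.1)| + |h p.1 * (p.2.1 - p.1)| := abs_sub _ _
        _ ≤ |(-c p - f p.1)| + |g p.2.1| + |h p.1| * |p.2.1 - p.1| := by
            rw [abs_mul]
            exact add_le_add_left (abs_sub _ _) _
        _ ≤ |c p| + |f p.1| + |g p.2.1| + |h p.1| * |p.2.1 - p.1| := by
            have := (abs_sub (-c p) (f p.1)).trans (add_le_add_left (le_of_eq (abs_neg _)) _)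
            linarith
    have k5 : |p.2.1 - p.1| ≤ Rν + Rμ := (abs_sub _ _).trans (add_le_add e8 e5)
    have k6 : |h p.1| * |p.2.1 - p.1| ≤ Ch * (Rν + Rμ) :=
      mul_le_mul e3 k5 (abs_nonneg _) ((abs_nonneg _).trans e3)
    rw [hCBdef]; linarith [hcb p]
  -- exponent identity
  have hexp : ∀ (t : ℝ) (p : ℝ × ℝ × ℝ),
      -c p - (t * f' p.1 + (1 - t) * f p.1) - (t * g' p.2.1 + (1 - t) * g p.2.1)
        - (t * h' p.1 + (1 - t) * h p.1) * (p.2.1 - p.1) = B p - t * A p := by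
    intro t p; rw [hAdef, hBdef]; ring
  -- integrability of f, f', g, g'
  have hint : ∀ (τ : Measure ℝ) [IsProbabilityMeasure τ] (u : ℝ → ℝ) (_ : Measurable u)
      (Cu : ℝ) (_ : ∀ᵐ x ∂τ, |u x| ≤ Cu), Integrable u τ := by
    intro τ _ u hu Cu hub
    exact Integrable.mono' (integrable_const Cu) hu.aestronglyMeasurable
      (hub.mono fun x hx => by rwa [Real.norm_eq_abs])
  have hfint : Integrable f μ := hint μ f hfm Cf hfb
  have hf'int : Integrable f' μ := hint μ f' hf'm Cf' hf'b
  have hgint : Integrable g ν := hint ν g hgm Cg hgb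
  have hg'int : Integrable g' ν := hint ν g' hg'm Cg' hg'b
  set If := ∫ x, f x ∂μ
  set If' := ∫ x, f' x ∂μ
  set Ig := ∫ y, g y ∂ν
  set Ig' := ∫ y, g' y ∂ν
  set Z : ℕ → ℝ → ℝ := fun n t => ∫ p, (-A p) ^ n * Real.exp (B p - t * A p) ∂π with hZdef
  have hZint : ∀ n t, Integrable (fun p => (-A p) ^ n * Real.exp (B p - t * A p)) π :=
    fun n t => aux_int π A B hAm hBm CA CB hCAb hCBb n t
  have hZderiv : ∀ n t₀, HasDerivAt (Z n) (Z (n + 1) t₀) t₀ :=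
    fun n t₀ => aux_deriv π A B hAm hBm CA CB hCAb hCBb n t₀
  -- rewrite φ
  have hrw : ∀ t : ℝ, φ t = -(Z 0 t) - ((1 - t) * If + t * If') - ((1 - t) * Ig + t * Ig') := by
    intro t
    rw [hφ t, Gfun]
    have e1 : (∫ q, Real.exp (-c q - (t * f' q.1 + (1 - t) * f q.1)
        - (t * g' q.2.1 + (1 - t) * g q.2.1)
        - (t * h' q.1 + (1 - t) * h q.1) * (q.2.1 - q.1)) ∂(μ.prod (ν.prod ρ))) = Z 0 t := by
      rw [hZdef]
      apply integral_congr_ae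
      refine Eventually.of_forall fun q => ?_
      simp only [pow_zero, one_mul]
      exact congrArg Real.exp (hexp t q)
    have e2 : (∫ x, (t * f' x + (1 - t) * f x) ∂μ) = (1 - t) * If + t * If' := by
      rw [integral_add (hf'int.const_mul t) (hfint.const_mul (1 - t)),
        integral_const_mul, integral_const_mul]
      ring
    have e3 : (∫ y, (t * g' y + (1 - t) * g y) ∂ν) = (1 - t) * Ig + t * Ig' := by
      rw [integral_add (hg'int.const_mul t) (hgint.const_mul (1 - t)),
        integral_const_mul, integral_const_mul]
      ring
    rw [e1, e2, e3]
  constructor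
  · -- concavity
    refine ⟨convex_Icc 0 1, ?_⟩
    intro x _ y _ a b ha hb hab
    simp only [smul_eq_mul]
    rw [hrw x, hrw y, hrw (a * x + b * y)]
    have hkey : Z 0 (a * x + b * y) ≤ a * Z 0 x + b * Z 0 y := by
      have hle : ∀ p, (-A p) ^ 0 * Real.exp (B p - (a * x + b * y) * A p) ≤
          a * ((-A p) ^ 0 * Real.exp (B p - x * A p))
            + b * ((-A p) ^ 0 * Real.exp (B p - y * A p)) := by
        intro p
        simp only [pow_zero, one_mul]
        have harg : B p - (a * x + b * y) * A p
            = a * (B p - x * A p) + b * (B p - y * A p) := by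
          linear_combination (-(B p)) * hab
        rw [harg]
        have := convexOn_exp.2 (mem_univ (B p - x * A p)) (mem_univ (B p - y * A p)) ha hb hab
        simpa [smul_eq_mul] using this
      calc Z 0 (a * x + b * y)
          ≤ ∫ p, (a * ((-A p) ^ 0 * Real.exp (B p - x * A p))
              + b * ((-A p) ^ 0 * Real.exp (B p - y * A p))) ∂π :=
            integral_mono (hZint 0 (a * x + b * y))
              (((hZint 0 x).const_mul a).add ((hZint 0 y).const_mul b)) hle
        _ = a * Z 0 x + b * Z 0 y := by
            rw [integral_add ((hZint 0 x).const_mul a) ((hZint 0 y).const_mul b),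
              integral_const_mul, integral_const_mul]
    have heqf : a * ((1 - x) * If + x * If') + b * ((1 - y) * If + y * If')
        = (1 - (a * x + b * y)) * If + (a * x + b * y) * If' := by
      linear_combination If * hab
    have heqg : a * ((1 - x) * Ig + x * Ig') + b * ((1 - y) * Ig + y * Ig')
        = (1 - (a * x + b * y)) * Ig + (a * x + b * y) * Ig' := by
      linear_combination Ig * hab
    linarith [hkey, heqf, heqg]
  · -- differentiability
    refine ⟨fun t => -(Z 1 t) - (If' - If) - (Ig' - Ig), ?_, ?_⟩
    · intro t _
      have heq : φ = fun t => -(Z 0 t) - ((1 - t) * If + t * If')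
          - ((1 - t) * Ig + t * Ig') := funext hrw
      rw [heq]
      have l1 : HasDerivAt (fun t : ℝ => (1 - t) * If + t * If') (If' - If) t := by
        have a1 : HasDerivAt (fun t : ℝ => (1 - t) * If) ((-1) * If) t :=
          (((hasDerivAt_id t).const_sub 1)).mul_const If
        have a2 : HasDerivAt (fun t : ℝ => t * If') (1 * If') t :=
          (hasDerivAt_id t).mul_const If'
        exact (a1.add a2).congr_deriv (by ring)
      have l2 : HasDerivAt (fun t : ℝ => (1 - t) * Ig + t * Ig') (Ig' - Ig) t := by
        have a1 : HasDerivAt (fun t : ℝ => (1 - t) * Ig) ((-1) * Ig) t :=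
          (((hasDerivAt_id t).const_sub 1)).mul_const Ig
        have a2 : HasDerivAt (fun t : ℝ => t * Ig') (1 * Ig') t :=
          (hasDerivAt_id t).mul_const Ig'
        exact (a1.add a2).congr_deriv (by ring)
      exact (((hZderiv 0 t).neg).sub l1).sub l2
    · intro t _
      have hd := ((hZderiv 1 t).neg).sub_const ((If' - If))
      have hd2 := hd.sub_const (Ig' - Ig)
      refine hd2.congr_deriv ?_
      rw [hZdef]
      rw [neg_inj]
      apply integral_congr_ae
      refine Eventually.of_forall fun p => ?_
      simp only [hexp t p, hAdef]
      ring
end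

section
/- Let μ, ν be compactly supported Borel probability measures on ℝ with ∫ y dν(y) = 0, let |X| denote the essential supremum of |x| under μ, and let Var(ν) = ∫ y² dν(y) > 0. Let f, h ∈ L²(μ) and g ∈ L²(ν) satisfy the normalizations ∫ g dν = 0 and ∫ h dμ = 0. Then the exact identity holds: ∫∫ |f(x)+g(y)+h(x)(y−x)|² d(μ⊗ν)(x,y) = ∫ |f(x)−h(x)·x|² dμ(x) + ∫ |g(y)|² dν(y) + Var(ν)·∫ |h(x)|² dμ(x). Consequently, with δ = (Var(ν)/(2|X|²) + 1)^{−1}, one has ∫∫ |f(x)+g(y)+h(x)(y−x)|² d(μ⊗ν) ≥ (1−δ)·∫ f² dμ + ∫ g² dν + (Var(ν)/2)·∫ h² dμ. -/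
open MeasureTheory Filter Set
open scoped ENNReal

theorem L2.mul_int {α : Type*} [MeasurableSpace α] {μ : Measure α} {f g : α → ℝ}
    (hf : MemLp f 2 μ) (hg : MemLp g 2 μ) : Integrable (fun x => f x * g x) μ := by
  have h1 : (1:ℝ≥0∞)/1 = 1/2 + 1/2 := by
    rw [ENNReal.div_add_div_same]
    norm_num
    rw [ENNReal.div_self (by norm_num) (by norm_num)]
  have := hf.smul (r := 1) hg
  rw [memLp_one_iff_integrable] at this
  have e : (g • f) = fun x => f x * g x := by ext x; simp [smul_eq_mul, mul_comm]
  rwa [e] at this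

theorem stmt_12
    (μ ν : Measure ℝ) [IsProbabilityMeasure μ] [IsProbabilityMeasure ν]
    (A B : ℝ) (hA : ∀ᵐ x ∂μ, |x| ≤ A) (hB : ∀ᵐ y ∂ν, |y| ≤ B)
    (hν0 : ∫ y, y ∂ν = 0) (hVar : 0 < ∫ y, y ^ 2 ∂ν)
    (f g h : ℝ → ℝ)
    (hf : MemLp f 2 μ) (hg : MemLp g 2 ν) (hh : MemLp h 2 μ)
    (hgn : ∫ y, g y ∂ν = 0) (hhn : ∫ x, h x ∂μ = 0) :
    (∫ p : ℝ × ℝ, (f p.1 + g p.2 + h p.1 * (p.2 - p.1)) ^ 2 ∂(μ.prod ν)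
      = (∫ x, (f x - h x * x) ^ 2 ∂μ) + (∫ y, (g y) ^ 2 ∂ν)
        + (∫ y, y ^ 2 ∂ν) * ∫ x, (h x) ^ 2 ∂μ) ∧
    (∫ p : ℝ × ℝ, (f p.1 + g p.2 + h p.1 * (p.2 - p.1)) ^ 2 ∂(μ.prod ν)
      ≥ (1 - ((∫ y, y ^ 2 ∂ν) / (2 * A ^ 2) + 1)⁻¹) * (∫ x, (f x) ^ 2 ∂μ)
        + (∫ y, (g y) ^ 2 ∂ν) + ((∫ y, y ^ 2 ∂ν) / 2) * ∫ x, (h x) ^ 2 ∂μ) := by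
  set V := ∫ y, y ^ 2 ∂ν with hV
  set F : ℝ → ℝ := fun x => f x - h x * x with hFdef
  clear_value V F
  -- basic positivity facts
  haveI : (ae μ).NeBot := ae_neBot.2 (IsProbabilityMeasure.ne_zero μ)
  obtain ⟨x₀, hx₀⟩ := hA.exists
  have hA0 : 0 ≤ A := le_trans (abs_nonneg x₀) hx₀
  -- Memℒp facts
  have hhx : MemLp (fun x : ℝ => h x * x) 2 μ := by
    refine MemLp.of_le_mul (c := A) hh
      (hh.aestronglyMeasurable.mul aestronglyMeasurable_id) ?_
    filter_upwards [hA] with x hx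
    simp only [norm_mul, Real.norm_eq_abs]
    calc |h x| * |x| ≤ |h x| * A := by
          exact mul_le_mul_of_nonneg_left hx (abs_nonneg _)
      _ = A * |h x| := mul_comm _ _
  have hF : MemLp F 2 μ := by rw [hFdef]; exact hf.sub hhx
  have hidν : MemLp (fun y : ℝ => y) 2 ν :=
    MemLp.of_bound aestronglyMeasurable_id B (by simpa using hB)
  -- Integrability facts
  have iF2 : Integrable (fun x => F x ^ 2) μ := hF.integrable_sq
  have if2 : Integrable (fun x => f x ^ 2) μ := hf.integrable_sq
  have ig2 : Integrable (fun y => g y ^ 2) ν := hg.integrable_sq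
  have ih2 : Integrable (fun x => h x ^ 2) μ := hh.integrable_sq
  have iy2 : Integrable (fun y : ℝ => y ^ 2) ν := hidν.integrable_sq
  have iF : Integrable F μ := hF.integrable one_le_two
  have ig : Integrable g ν := hg.integrable one_le_two
  have ih : Integrable h μ := hh.integrable one_le_two
  have iy : Integrable (fun y : ℝ => y) ν := hidν.integrable one_le_two
  have iFh : Integrable (fun x => F x * h x) μ := L2.mul_int hF hh
  have igy : Integrable (fun y => g y * y) ν := L2.mul_int hg hidν
  -- the six pieces of the expansion
  have I1 : Integrable (fun p : ℝ × ℝ => F p.1 ^ 2 * (1 : ℝ)) (μ.prod ν) :=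
    iF2.mul_prod (integrable_const 1)
  have I2 : Integrable (fun p : ℝ × ℝ => (1 : ℝ) * g p.2 ^ 2) (μ.prod ν) :=
    (integrable_const 1).mul_prod ig2
  have I3 : Integrable (fun p : ℝ × ℝ => h p.1 ^ 2 * p.2 ^ 2) (μ.prod ν) :=
    ih2.mul_prod iy2
  have I4 : Integrable (fun p : ℝ × ℝ => 2 * F p.1 * g p.2) (μ.prod ν) :=
    (iF.const_mul 2).mul_prod ig
  have I5 : Integrable (fun p : ℝ × ℝ => 2 * (F p.1 * h p.1) * p.2) (μ.prod ν) :=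
    (iFh.const_mul 2).mul_prod iy
  have I6 : Integrable (fun p : ℝ × ℝ => 2 * h p.1 * (g p.2 * p.2)) (μ.prod ν) :=
    (ih.const_mul 2).mul_prod igy
  have expand : ∫ p : ℝ × ℝ, (f p.1 + g p.2 + h p.1 * (p.2 - p.1)) ^ 2 ∂(μ.prod ν)
      = ∫ p : ℝ × ℝ, (F p.1 ^ 2 * (1 : ℝ) + ((1 : ℝ) * g p.2 ^ 2 + (h p.1 ^ 2 * p.2 ^ 2
          + (2 * F p.1 * g p.2 + (2 * (F p.1 * h p.1) * p.2
            + 2 * h p.1 * (g p.2 * p.2)))))) ∂(μ.prod ν) := by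
    refine integral_congr_ae (Eventually.of_forall fun p => ?_)
    simp only [hFdef]
    ring
  have I56 : Integrable (fun p : ℝ × ℝ => 2 * (F p.1 * h p.1) * p.2
      + 2 * h p.1 * (g p.2 * p.2)) (μ.prod ν) := I5.add I6
  have I456 : Integrable (fun p : ℝ × ℝ => 2 * F p.1 * g p.2 + (2 * (F p.1 * h p.1) * p.2
      + 2 * h p.1 * (g p.2 * p.2))) (μ.prod ν) := I4.add I56
  have I3456 : Integrable (fun p : ℝ × ℝ => h p.1 ^ 2 * p.2 ^ 2
      + (2 * F p.1 * g p.2 + (2 * (F p.1 * h p.1) * p.2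
      + 2 * h p.1 * (g p.2 * p.2)))) (μ.prod ν) := I3.add I456
  have I23456 : Integrable (fun p : ℝ × ℝ => (1 : ℝ) * g p.2 ^ 2 + (h p.1 ^ 2 * p.2 ^ 2
      + (2 * F p.1 * g p.2 + (2 * (F p.1 * h p.1) * p.2
      + 2 * h p.1 * (g p.2 * p.2))))) (μ.prod ν) := I2.add I3456
  have part1 : ∫ p : ℝ × ℝ, (f p.1 + g p.2 + h p.1 * (p.2 - p.1)) ^ 2 ∂(μ.prod ν)
      = (∫ x, F x ^ 2 ∂μ) + (∫ y, g y ^ 2 ∂ν) + V * ∫ x, h x ^ 2 ∂μ := by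
    rw [expand, integral_add I1 I23456, integral_add I2 I3456, integral_add I3 I456,
      integral_add I4 I56, integral_add I5 I6,
      integral_prod_mul (fun x => F x ^ 2) (fun _ => (1:ℝ)),
      integral_prod_mul (fun _ => (1:ℝ)) (fun y => g y ^ 2),
      integral_prod_mul (fun x => h x ^ 2) (fun y => y ^ 2),
      integral_prod_mul (fun x => 2 * F x) g,
      integral_prod_mul (fun x => 2 * (F x * h x)) (fun y => y),
      integral_prod_mul (fun x => 2 * h x) (fun y => g y * y)]
    simp only [integral_const, measure_univ, ENNReal.toReal_one, probReal_univ, smul_eq_mul, one_mul, mul_one]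
    rw [show (∫ x, 2 * h x ∂μ) = 2 * ∫ x, h x ∂μ from integral_const_mul 2 h]
    rw [show (∫ x, 2 * F x ∂μ) = 2 * ∫ x, F x ∂μ from integral_const_mul 2 F]
    rw [show (∫ x, 2 * (F x * h x) ∂μ) = 2 * ∫ x, F x * h x ∂μ from
      integral_const_mul 2 _]
    rw [hν0, hhn]
    have : ∫ y, g y ∂ν = 0 := hgn
    rw [this, ← hV]
    ring
  refine ⟨by simpa only [hFdef] using part1, ?_⟩
  -- nonnegativity of the square integrals
  have nF2 : 0 ≤ ∫ x, F x ^ 2 ∂μ := integral_nonneg fun x => sq_nonneg _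
  have nh2 : 0 ≤ ∫ x, h x ^ 2 ∂μ := integral_nonneg fun x => sq_nonneg _
  have ng2 : 0 ≤ ∫ y, g y ^ 2 ∂ν := integral_nonneg fun y => sq_nonneg _
  have nf2 : 0 ≤ ∫ x, f x ^ 2 ∂μ := integral_nonneg fun x => sq_nonneg _
  rcases eq_or_lt_of_le hA0 with hA0' | hApos
  · -- A = 0 : the coefficient in front of ∫ f² is 0
    have : (V / (2 * A ^ 2) + 1)⁻¹ = 1 := by
      rw [← hA0']
      norm_num
    rw [part1, this]
    have h1 : 0 ≤ (V / 2) * ∫ x, h x ^ 2 ∂μ := mul_nonneg (by linarith) nh2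
    linarith only [nF2, h1]
  · -- A > 0
    have hVA : 0 < V + 2 * A ^ 2 := by positivity
    have h2A : (0:ℝ) < 2 * A ^ 2 := by positivity
    have hδ : 1 - (V / (2 * A ^ 2) + 1)⁻¹ = V / (V + 2 * A ^ 2) := by
      rw [show V / (2 * A ^ 2) + 1 = (V + 2 * A ^ 2) / (2 * A ^ 2) by
        field_simp]
      rw [inv_div]
      field_simp
      ring
    have hkey : V / (V + 2 * A ^ 2) * ∫ x, f x ^ 2 ∂μ
        ≤ (∫ x, F x ^ 2 ∂μ) + (V / 2) * ∫ x, h x ^ 2 ∂μ := by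
      have mono : ∫ x, V / (V + 2 * A ^ 2) * f x ^ 2 ∂μ
          ≤ ∫ x, (F x ^ 2 + (V / 2) * h x ^ 2) ∂μ := by
        refine integral_mono_ae (if2.const_mul _) (iF2.add (ih2.const_mul _)) ?_
        filter_upwards [hA] with x hx
        have hx2 : x ^ 2 ≤ A ^ 2 := by
          have := abs_nonneg x
          nlinarith [sq_abs x]
        have hfx : f x = F x + h x * x := by simp [hFdef]
        rw [hfx, div_mul_eq_mul_div, div_le_iff₀ hVA]
        have key2 : 2 * A ^ 2 * (V * (F x + h x * x) ^ 2)
            ≤ 2 * A ^ 2 * ((F x ^ 2 + V / 2 * h x ^ 2) * (V + 2 * A ^ 2)) := by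
          nlinarith [sq_nonneg (2 * A ^ 2 * F x - V * (h x) * x),
            mul_nonneg (mul_nonneg hVar.le hVar.le)
              (mul_nonneg (sq_nonneg (h x)) (sub_nonneg.2 hx2)),
            mul_nonneg (mul_nonneg hVar.le h2A.le)
              (mul_nonneg (sq_nonneg (h x)) (sub_nonneg.2 hx2))]
        exact le_of_mul_le_mul_left key2 h2A
      rwa [integral_const_mul, integral_add iF2 (ih2.const_mul _),
        integral_const_mul] at mono
    rw [part1, hδ]
    have h1 : 0 ≤ (V / 2) * ∫ x, h x ^ 2 ∂μ := mul_nonneg (by linarith) nh2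
    linarith only [hkey, h1]
end

section
/- Let ν, ρ be Borel probability measures on ℝ with ν compactly supported, not a Dirac mass, and ∫ y dν = 0; write Var(ν) = ∫ y² dν > 0 and let |Y| be the essential supremum of |y| under ν. Let c : ℝ³ → ℝ be continuously differentiable with |∇c| ≤ L_c and |c| ≤ C_c, and let g : ℝ → ℝ be bounded measurable with |g| ≤ C_g. Let I ⊆ [−A, A] be an open interval and h : I → ℝ a differentiable function with |h| ≤ C_h on I such that for every x ∈ I, ∫ (y−x)·exp(−c(x,y,z)−g(y)−h(x)·(y−x)) d(ν⊗ρ)(y,z) = 0. Then for every x ∈ I: |h′(x)| ≤ (1 + L_c·(A+|Y|)) · exp(2·(C_c + C_g + C_h·|Y|)) / Var(ν). -/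
open MeasureTheory Filter Set

noncomputable def auxU (c : ℝ × ℝ × ℝ → ℝ) (p q : ℝ × ℝ) : (ℝ × ℝ) →L[ℝ] ℝ :=
  -((fderiv ℝ c (p.1, q.1, q.2)).comp ((ContinuousLinearMap.fst ℝ ℝ ℝ).prod 0)) -
    (p.2 • ((0 : (ℝ × ℝ) →L[ℝ] ℝ) - ContinuousLinearMap.fst ℝ ℝ ℝ) +
      (q.1 - p.1) • ContinuousLinearMap.snd ℝ ℝ ℝ)

noncomputable def auxF' (c : ℝ × ℝ × ℝ → ℝ) (g : ℝ → ℝ) (p q : ℝ × ℝ) : (ℝ × ℝ) →L[ℝ] ℝ :=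
  (q.1 - p.1) • (Real.exp (-c (p.1, q.1, q.2) - g q.1 - p.2 * (q.1 - p.1)) • auxU c p q) +
    Real.exp (-c (p.1, q.1, q.2) - g q.1 - p.2 * (q.1 - p.1)) •
      ((0 : (ℝ × ℝ) →L[ℝ] ℝ) - ContinuousLinearMap.fst ℝ ℝ ℝ)

lemma auxHasFDeriv (c : ℝ × ℝ × ℝ → ℝ) (hc1 : ContDiff ℝ 1 c) (g : ℝ → ℝ) (p q : ℝ × ℝ) :
    HasFDerivAt (fun p : ℝ × ℝ => (q.1 - p.1) *
        Real.exp (-c (p.1, q.1, q.2) - g q.1 - p.2 * (q.1 - p.1)))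
      (auxF' c g p q) p := by
  have hm : HasFDerivAt (fun p : ℝ × ℝ => ((p.1, q.1, q.2) : ℝ × ℝ × ℝ))
      ((ContinuousLinearMap.fst ℝ ℝ ℝ).prod 0) p :=
    (hasFDerivAt_fst).prodMk (hasFDerivAt_const _ _)
  have hcd : HasFDerivAt (fun p : ℝ × ℝ => c (p.1, q.1, q.2))
      ((fderiv ℝ c (p.1, q.1, q.2)).comp ((ContinuousLinearMap.fst ℝ ℝ ℝ).prod 0)) p :=
    ((hc1.differentiable one_ne_zero (p.1, q.1, q.2)).hasFDerivAt).comp p hm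
  have hsub : HasFDerivAt (fun p : ℝ × ℝ => q.1 - p.1)
      ((0 : (ℝ × ℝ) →L[ℝ] ℝ) - ContinuousLinearMap.fst ℝ ℝ ℝ) p :=
    (hasFDerivAt_const _ _).sub hasFDerivAt_fst
  have hmul : HasFDerivAt (fun p : ℝ × ℝ => p.2 * (q.1 - p.1))
      (p.2 • ((0 : (ℝ × ℝ) →L[ℝ] ℝ) - ContinuousLinearMap.fst ℝ ℝ ℝ) +
        (q.1 - p.1) • ContinuousLinearMap.snd ℝ ℝ ℝ) p :=
    (hasFDerivAt_snd).mul hsub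
  have hu : HasFDerivAt (fun p : ℝ × ℝ => -c (p.1, q.1, q.2) - g q.1 - p.2 * (q.1 - p.1))
      (auxU c p q) p := ((hcd.neg.sub_const (g q.1)).sub hmul)
  exact hsub.mul hu.exp

lemma auxF'_apply10 (c : ℝ × ℝ × ℝ → ℝ) (g : ℝ → ℝ) (p q : ℝ × ℝ) :
    auxF' c g p q (1, 0) =
      (q.1 - p.1) * (Real.exp (-c (p.1, q.1, q.2) - g q.1 - p.2 * (q.1 - p.1)) *
        (p.2 - fderiv ℝ c (p.1, q.1, q.2) (1, 0, 0))) -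
      Real.exp (-c (p.1, q.1, q.2) - g q.1 - p.2 * (q.1 - p.1)) := by
  simp [auxF', auxU, Prod.mk_zero_zero]
  ring

lemma auxF'_apply01 (c : ℝ × ℝ × ℝ → ℝ) (g : ℝ → ℝ) (p q : ℝ × ℝ) :
    auxF' c g p q (0, 1) =
      -((q.1 - p.1) ^ 2 * Real.exp (-c (p.1, q.1, q.2) - g q.1 - p.2 * (q.1 - p.1))) := by
  simp [auxF', auxU, Prod.mk_zero_zero]
  ring

lemma norm_fst_clm_le : ‖ContinuousLinearMap.fst ℝ ℝ ℝ‖ ≤ 1 :=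
  ContinuousLinearMap.opNorm_le_bound _ zero_le_one fun v => by simpa using norm_fst_le v

lemma norm_snd_clm_le : ‖ContinuousLinearMap.snd ℝ ℝ ℝ‖ ≤ 1 :=
  ContinuousLinearMap.opNorm_le_bound _ zero_le_one fun v => by simpa using norm_snd_le v

lemma norm_Mc_le : ‖(ContinuousLinearMap.fst ℝ ℝ ℝ).prod (0 : (ℝ × ℝ) →L[ℝ] ℝ × ℝ)‖ ≤ 1 := by
  refine ContinuousLinearMap.opNorm_le_bound _ zero_le_one fun v => ?_
  simp only [ContinuousLinearMap.prod_apply, ContinuousLinearMap.zero_apply,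
    ContinuousLinearMap.coe_fst', Prod.norm_def, norm_zero, one_mul]
  exact max_le (norm_fst_le v) (norm_nonneg v)

lemma smul_clm_norm_le (r : ℝ) (T : (ℝ × ℝ) →L[ℝ] ℝ) : ‖r • T‖ ≤ |r| * ‖T‖ := by
  simpa using norm_smul_le r T

lemma auxU_norm_le (c : ℝ × ℝ × ℝ → ℝ) (Lc : ℝ) (hcg : ∀ p, ‖fderiv ℝ c p‖ ≤ Lc)
    (p q : ℝ × ℝ) : ‖auxU c p q‖ ≤ Lc + (|p.2| + |q.1 - p.1|) := by
  have hLc0 : 0 ≤ Lc := le_trans (norm_nonneg _) (hcg 0)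
  have h1 : ‖(fderiv ℝ c (p.1, q.1, q.2)).comp
      ((ContinuousLinearMap.fst ℝ ℝ ℝ).prod (0 : (ℝ × ℝ) →L[ℝ] ℝ × ℝ))‖ ≤ Lc :=
    calc ‖(fderiv ℝ c (p.1, q.1, q.2)).comp _‖
        ≤ ‖fderiv ℝ c (p.1, q.1, q.2)‖ * ‖(ContinuousLinearMap.fst ℝ ℝ ℝ).prod
            (0 : (ℝ × ℝ) →L[ℝ] ℝ × ℝ)‖ := ContinuousLinearMap.opNorm_comp_le _ _
      _ ≤ Lc * 1 := mul_le_mul (hcg _) norm_Mc_le (norm_nonneg _) hLc0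
      _ = Lc := mul_one _
  have h2 : ‖p.2 • ((0 : (ℝ × ℝ) →L[ℝ] ℝ) - ContinuousLinearMap.fst ℝ ℝ ℝ) +
      (q.1 - p.1) • ContinuousLinearMap.snd ℝ ℝ ℝ‖ ≤ |p.2| + |q.1 - p.1| := by
    refine le_trans (norm_add_le _ _) (add_le_add ?_ ?_)
    · refine le_trans (smul_clm_norm_le _ _) ?_
      rw [zero_sub, norm_neg]
      calc |p.2| * ‖ContinuousLinearMap.fst ℝ ℝ ℝ‖ ≤ |p.2| * 1 :=
            mul_le_mul_of_nonneg_left norm_fst_clm_le (abs_nonneg _)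
        _ = |p.2| := mul_one _
    · refine le_trans (smul_clm_norm_le _ _) ?_
      calc |q.1 - p.1| * ‖ContinuousLinearMap.snd ℝ ℝ ℝ‖ ≤ |q.1 - p.1| * 1 :=
            mul_le_mul_of_nonneg_left norm_snd_clm_le (abs_nonneg _)
        _ = |q.1 - p.1| := mul_one _
  calc ‖auxU c p q‖ ≤ ‖-((fderiv ℝ c (p.1, q.1, q.2)).comp
        ((ContinuousLinearMap.fst ℝ ℝ ℝ).prod 0))‖ +
        ‖p.2 • ((0 : (ℝ × ℝ) →L[ℝ] ℝ) - ContinuousLinearMap.fst ℝ ℝ ℝ) +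
          (q.1 - p.1) • ContinuousLinearMap.snd ℝ ℝ ℝ‖ := norm_sub_le _ _
    _ ≤ Lc + (|p.2| + |q.1 - p.1|) := by rw [norm_neg]; exact add_le_add h1 h2

lemma auxF'_norm_le (c : ℝ × ℝ × ℝ → ℝ) (g : ℝ → ℝ) (Lc Cc Cg : ℝ)
    (hcg : ∀ p, ‖fderiv ℝ c p‖ ≤ Lc) (hcb : ∀ p, |c p| ≤ Cc) (hgb : ∀ y, |g y| ≤ Cg)
    (X Λ R : ℝ) (p q : ℝ × ℝ) (hp1 : |p.1| ≤ X) (hp2 : |p.2| ≤ Λ) (hq : |q.1 - p.1| ≤ R) :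
    ‖auxF' c g p q‖ ≤ R * (Real.exp (Cc + Cg + Λ * R) * (Lc + (Λ + R))) +
      Real.exp (Cc + Cg + Λ * R) := by
  have hΛ0 : 0 ≤ Λ := le_trans (abs_nonneg _) hp2
  have hR0 : 0 ≤ R := le_trans (abs_nonneg _) hq
  set E := Real.exp (Cc + Cg + Λ * R) with hE
  have hexp : Real.exp (-c (p.1, q.1, q.2) - g q.1 - p.2 * (q.1 - p.1)) ≤ E := by
    rw [hE, Real.exp_le_exp]
    have h1 : -c (p.1, q.1, q.2) ≤ Cc := by
      have := abs_le.mp (hcb (p.1, q.1, q.2)); linarith [this.1]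
    have h2 : -g q.1 ≤ Cg := by have := abs_le.mp (hgb q.1); linarith [this.1]
    have h3 : -(p.2 * (q.1 - p.1)) ≤ Λ * R := by
      have h4 : |p.2 * (q.1 - p.1)| ≤ Λ * R := by
        rw [abs_mul]; exact mul_le_mul hp2 hq (abs_nonneg _) hΛ0
      have := abs_le.mp h4; linarith [this.1]
    linarith
  have hexp0 : (0:ℝ) < Real.exp (-c (p.1, q.1, q.2) - g q.1 - p.2 * (q.1 - p.1)) := Real.exp_pos _
  have hE0 : (0:ℝ) ≤ E := (Real.exp_pos _).le
  have hU : ‖auxU c p q‖ ≤ Lc + (Λ + R) := by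
    refine le_trans (auxU_norm_le c Lc hcg p q) ?_
    have := add_le_add hp2 hq
    linarith
  have hLc0 : 0 ≤ Lc := le_trans (norm_nonneg _) (hcg 0)
  refine le_trans (norm_add_le _ _) (add_le_add ?_ ?_)
  · refine le_trans (smul_clm_norm_le _ _) ?_
    refine mul_le_mul hq ?_ (norm_nonneg _) hR0
    refine le_trans (smul_clm_norm_le _ _) ?_
    rw [abs_of_pos hexp0]
    exact mul_le_mul hexp hU (norm_nonneg _) hE0
  · refine le_trans (smul_clm_norm_le _ _) ?_
    rw [abs_of_pos hexp0, zero_sub, norm_neg]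
    calc Real.exp (-c (p.1, q.1, q.2) - g q.1 - p.2 * (q.1 - p.1)) *
          ‖ContinuousLinearMap.fst ℝ ℝ ℝ‖ ≤ E * 1 :=
        mul_le_mul hexp norm_fst_clm_le (norm_nonneg _) hE0
      _ = E := mul_one _

set_option maxHeartbeats 1000000 in
theorem stmt_14
    (ν ρ : Measure ℝ) [IsProbabilityMeasure ν] [IsProbabilityMeasure ρ]
    (hνnd : ∀ y₀ : ℝ, ν ≠ Measure.dirac y₀) (hν0 : ∫ y, y ∂ν = 0)
    (B : ℝ) (hB : ∀ᵐ y ∂ν, |y| ≤ B)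
    (hVar : 0 < ∫ y, y ^ 2 ∂ν)
    (c : ℝ × ℝ × ℝ → ℝ) (Lc Cc : ℝ) (hc1 : ContDiff ℝ 1 c)
    (hcg : ∀ p, ‖fderiv ℝ c p‖ ≤ Lc) (hcb : ∀ p, |c p| ≤ Cc)
    (g : ℝ → ℝ) (Cg : ℝ) (hgm : Measurable g) (hgb : ∀ y, |g y| ≤ Cg)
    (A a b : ℝ) (hI : Set.Ioo a b ⊆ Set.Icc (-A) A)
    (h : ℝ → ℝ) (Ch : ℝ)
    (hdiff : ∀ x ∈ Set.Ioo a b, DifferentiableAt ℝ h x)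
    (hhb : ∀ x ∈ Set.Ioo a b, |h x| ≤ Ch)
    (hfoc : ∀ x ∈ Set.Ioo a b, ∫ q : ℝ × ℝ,
        (q.1 - x) * Real.exp (-c (x, q.1, q.2) - g q.1 - h x * (q.1 - x)) ∂(ν.prod ρ) = 0) :
    ∀ x ∈ Set.Ioo a b,
      |deriv h x| ≤ (1 + Lc * (A + B)) * Real.exp (2 * (Cc + Cg + Ch * B))
        / ∫ y, y ^ 2 ∂ν := by
  intro x₀ hx₀
  obtain ⟨hax, hbx⟩ := hx₀
  have hx₀ : x₀ ∈ Set.Ioo a b := ⟨hax, hbx⟩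
  have hxA : -A ≤ x₀ ∧ x₀ ≤ A := ⟨(hI hx₀).1, (hI hx₀).2⟩
  have hx₀A : |x₀| ≤ A := abs_le.mpr hxA
  have hA0 : 0 ≤ A := le_trans (abs_nonneg _) hx₀A
  have hCh0 : 0 ≤ Ch := le_trans (abs_nonneg _) (hhb x₀ hx₀)
  have hCc0 : 0 ≤ Cc := le_trans (abs_nonneg _) (hcb 0)
  have hCg0 : 0 ≤ Cg := le_trans (abs_nonneg _) (hgb 0)
  have hLc0 : 0 ≤ Lc := le_trans (norm_nonneg _) (hcg 0)
  have hlCh : |h x₀| ≤ Ch := hhb x₀ hx₀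
  -- B ≥ 0
  have hB0 : 0 ≤ B := by
    haveI : (ae ν).NeBot := ae_neBot.mpr (IsProbabilityMeasure.ne_zero ν)
    obtain ⟨y, hy⟩ := hB.exists
    exact le_trans (abs_nonneg _) hy
  set μ : Measure (ℝ × ℝ) := ν.prod ρ with hμdef
  have hBp : ∀ᵐ q ∂μ, |q.1| ≤ B := by
    have h1 : (ν.prod ρ).fst = ν := Measure.fst_prod
    have h2 : ∀ᵐ y ∂((ν.prod ρ).map Prod.fst), |y| ≤ B := by
      rw [show (ν.prod ρ).map Prod.fst = ν from h1]; exact hB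
    exact ae_of_ae_map measurable_fst.aemeasurable h2
  -- measurability of the exponent
  have hum : ∀ p : ℝ × ℝ, Measurable fun q : ℝ × ℝ =>
      -c (p.1, q.1, q.2) - g q.1 - p.2 * (q.1 - p.1) := by
    intro p
    have h1 : Measurable fun q : ℝ × ℝ => c (p.1, q.1, q.2) :=
      hc1.continuous.measurable.comp (measurable_const.prodMk measurable_id)
    exact (h1.neg.sub (hgm.comp measurable_fst)).sub
      (measurable_const.mul (measurable_fst.sub measurable_const))
  have hfm : ∀ p : ℝ × ℝ, AEStronglyMeasurable (fun q : ℝ × ℝ => (q.1 - p.1) *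
      Real.exp (-c (p.1, q.1, q.2) - g q.1 - p.2 * (q.1 - p.1))) μ :=
    fun p => ((measurable_fst.sub measurable_const).mul (hum p).exp).aestronglyMeasurable
  -- integrability helper
  have hint : ∀ (φ : ℝ × ℝ → ℝ) (C : ℝ), AEStronglyMeasurable φ μ →
      (∀ᵐ q ∂μ, |φ q| ≤ C) → Integrable φ μ :=
    fun φ C hm hb => Integrable.mono' (integrable_const C) hm (by simpa using hb)
  -- a.e. bounds at the base point
  have hq1x : ∀ᵐ q ∂μ, |q.1 - x₀| ≤ B + A := by
    filter_upwards [hBp] with q hq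
    have h1 := abs_le.mp hq
    have h2 := abs_le.mp hx₀A
    exact abs_le.mpr ⟨by linarith, by linarith⟩
  have hexp_ub : ∀ᵐ q ∂μ, Real.exp (-c (x₀, q.1, q.2) - g q.1 - h x₀ * (q.1 - x₀)) ≤
      Real.exp (Cc + Cg + Ch * B + h x₀ * x₀) := by
    filter_upwards [hBp] with q hq
    rw [Real.exp_le_exp]
    have h1 := abs_le.mp (hcb (x₀, q.1, q.2))
    have h2 := abs_le.mp (hgb q.1)
    have h3 : |h x₀ * q.1| ≤ Ch * B := by
      rw [abs_mul]; exact mul_le_mul hlCh hq (abs_nonneg _) hCh0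
    have h4 := abs_le.mp h3
    nlinarith [h1.1, h2.1, h4.1, h4.2]
  have hexp_lb : ∀ᵐ q ∂μ, Real.exp (-(Cc + Cg + Ch * B) + h x₀ * x₀) ≤
      Real.exp (-c (x₀, q.1, q.2) - g q.1 - h x₀ * (q.1 - x₀)) := by
    filter_upwards [hBp] with q hq
    rw [Real.exp_le_exp]
    have h1 := abs_le.mp (hcb (x₀, q.1, q.2))
    have h2 := abs_le.mp (hgb q.1)
    have h3 : |h x₀ * q.1| ≤ Ch * B := by
      rw [abs_mul]; exact mul_le_mul hlCh hq (abs_nonneg _) hCh0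
    have h4 := abs_le.mp h3
    nlinarith [h1.2, h2.2, h4.1, h4.2]
  -- ball bounds
  have hball : ∀ p ∈ Metric.ball ((x₀, h x₀) : ℝ × ℝ) 1, |p.1| ≤ A + 1 ∧ |p.2| ≤ Ch + 1 := by
    intro p hp
    rw [Metric.mem_ball, Prod.dist_eq] at hp
    have h1 : dist p.1 x₀ < 1 := lt_of_le_of_lt (le_max_left _ _) hp
    have h2 : dist p.2 (h x₀) < 1 := lt_of_le_of_lt (le_max_right _ _) hp
    rw [Real.dist_eq] at h1 h2
    have h3 := abs_lt.mp h1
    have h4 := abs_lt.mp h2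
    have h5 := abs_le.mp hx₀A
    have h6 := abs_le.mp hlCh
    exact ⟨abs_le.mpr ⟨by linarith, by linarith⟩, abs_le.mpr ⟨by linarith, by linarith⟩⟩
  have h_bound : ∀ᵐ q ∂μ, ∀ p ∈ Metric.ball ((x₀, h x₀) : ℝ × ℝ) 1,
      ‖auxF' c g p q‖ ≤ (B + (A + 1)) * (Real.exp (Cc + Cg + (Ch + 1) * (B + (A + 1))) *
        (Lc + ((Ch + 1) + (B + (A + 1))))) + Real.exp (Cc + Cg + (Ch + 1) * (B + (A + 1))) := by
    filter_upwards [hBp] with q hq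
    intro p hp
    obtain ⟨hp1, hp2⟩ := hball p hp
    refine auxF'_norm_le c g Lc Cc Cg hcg hcb hgb (A + 1) (Ch + 1) (B + (A + 1)) p q hp1 hp2 ?_
    have h1 := abs_le.mp hq
    have h2 := abs_le.mp hp1
    exact abs_le.mpr ⟨by linarith, by linarith⟩
  -- measurability of auxF' at the base point
  have hcontU : Continuous fun q : ℝ × ℝ => auxU c ((x₀, h x₀) : ℝ × ℝ) q := by
    have h1 : Continuous fun q : ℝ × ℝ => fderiv ℝ c (x₀, q.1, q.2) :=
      (hc1.continuous_fderiv one_ne_zero).comp (continuous_const.prodMk continuous_id)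
    exact ((h1.clm_comp continuous_const).neg).sub
      (continuous_const.add ((continuous_fst.sub continuous_const).smul continuous_const))
  have hF'meas : AEStronglyMeasurable (auxF' c g ((x₀, h x₀) : ℝ × ℝ)) μ := by
    refine AEStronglyMeasurable.add ?_ ?_
    · exact ((measurable_fst.sub measurable_const).aestronglyMeasurable).smul
        (((hum _).exp.aestronglyMeasurable).smul hcontU.aestronglyMeasurable)
    · exact ((hum _).exp.aestronglyMeasurable).smul aestronglyMeasurable_const
  -- integrability of F at the base point
  have hFint : Integrable (fun q : ℝ × ℝ => (q.1 - x₀) *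
      Real.exp (-c (x₀, q.1, q.2) - g q.1 - h x₀ * (q.1 - x₀))) μ := by
    refine hint _ ((B + A) * Real.exp (Cc + Cg + Ch * B + h x₀ * x₀)) (hfm (x₀, h x₀)) ?_
    filter_upwards [hq1x, hexp_ub] with q h1 h2
    rw [abs_mul, abs_of_pos (Real.exp_pos _)]
    exact mul_le_mul h1 h2 (Real.exp_pos _).le (by linarith)
  -- differentiation under the integral sign
  have HDer : HasFDerivAt (fun p : ℝ × ℝ => ∫ q, (q.1 - p.1) *
        Real.exp (-c (p.1, q.1, q.2) - g q.1 - p.2 * (q.1 - p.1)) ∂μ)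
      (∫ q, auxF' c g ((x₀, h x₀) : ℝ × ℝ) q ∂μ) ((x₀, h x₀) : ℝ × ℝ) := by
    exact hasFDerivAt_integral_of_dominated_of_fderiv_le (Metric.ball_mem_nhds _ one_pos)
      (Eventually.of_forall hfm) hFint hF'meas h_bound (integrable_const _)
      (Eventually.of_forall fun q p _ => auxHasFDeriv c hc1 g p q)
  have hf'int : Integrable (auxF' c g ((x₀, h x₀) : ℝ × ℝ)) μ := by
    refine Integrable.mono' (integrable_const ((B + (A + 1)) *
      (Real.exp (Cc + Cg + (Ch + 1) * (B + (A + 1))) * (Lc + ((Ch + 1) + (B + (A + 1))))) +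
      Real.exp (Cc + Cg + (Ch + 1) * (B + (A + 1))))) hF'meas ?_
    filter_upwards [h_bound] with q hb
    exact hb _ (Metric.mem_ball_self one_pos)
  -- chain rule along x ↦ (x, h x)
  have hd : HasDerivAt h (deriv h x₀) x₀ := (hdiff x₀ hx₀).hasDerivAt
  have hcurve : HasDerivAt (fun x : ℝ => ((x, h x) : ℝ × ℝ)) ((1 : ℝ), deriv h x₀) x₀ :=
    (hasDerivAt_id x₀).prodMk hd
  have hG : HasDerivAt (fun x : ℝ => ∫ q, (q.1 - x) *
      Real.exp (-c (x, q.1, q.2) - g q.1 - h x * (q.1 - x)) ∂μ)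
      ((∫ q, auxF' c g ((x₀, h x₀) : ℝ × ℝ) q ∂μ) (1, deriv h x₀)) x₀ := by
    have := HDer.comp_hasDerivAt x₀ hcurve
    exact this
  have hev : (fun _ : ℝ => (0 : ℝ)) =ᶠ[nhds x₀] fun x : ℝ => ∫ q, (q.1 - x) *
      Real.exp (-c (x, q.1, q.2) - g q.1 - h x * (q.1 - x)) ∂μ := by
    filter_upwards [Ioo_mem_nhds hax hbx] with x hx
    exact (hfoc x hx).symm
  have h0 : (∫ q, auxF' c g ((x₀, h x₀) : ℝ × ℝ) q ∂μ) (1, deriv h x₀) = 0 := by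
    have hz : HasDerivAt (fun _ : ℝ => (0 : ℝ))
        ((∫ q, auxF' c g ((x₀, h x₀) : ℝ × ℝ) q ∂μ) (1, deriv h x₀)) x₀ :=
      hG.congr_of_eventuallyEq hev
    simpa using hz.unique (hasDerivAt_const x₀ 0)
  have happ : (∫ q, auxF' c g ((x₀, h x₀) : ℝ × ℝ) q ∂μ) ((1 : ℝ), deriv h x₀) =
      (∫ q, auxF' c g ((x₀, h x₀) : ℝ × ℝ) q ((1:ℝ), (0:ℝ)) ∂μ) +
        deriv h x₀ * (∫ q, auxF' c g ((x₀, h x₀) : ℝ × ℝ) q ((0:ℝ), (1:ℝ)) ∂μ) := by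
    have hs : ((1 : ℝ), deriv h x₀) = ((1:ℝ), (0:ℝ)) + deriv h x₀ • ((0:ℝ), (1:ℝ)) := by
      simp [Prod.ext_iff]
    rw [hs, ContinuousLinearMap.map_add, ContinuousLinearMap.map_smul, smul_eq_mul,
      ContinuousLinearMap.integral_apply hf'int, ContinuousLinearMap.integral_apply hf'int]
  -- evaluation of the two directional derivatives
  have hval01 : (fun q : ℝ × ℝ => auxF' c g ((x₀, h x₀) : ℝ × ℝ) q ((0:ℝ), (1:ℝ))) =
      fun q : ℝ × ℝ => -((q.1 - x₀) ^ 2 *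
        Real.exp (-c (x₀, q.1, q.2) - g q.1 - h x₀ * (q.1 - x₀))) := by
    funext q
    have h1 := auxF'_apply01 c g (x₀, h x₀) q
    dsimp only at h1 ⊢
    rw [h1]
  have hval10 : (fun q : ℝ × ℝ => auxF' c g ((x₀, h x₀) : ℝ × ℝ) q ((1:ℝ), (0:ℝ))) =
      fun q : ℝ × ℝ => h x₀ * ((q.1 - x₀) *
          Real.exp (-c (x₀, q.1, q.2) - g q.1 - h x₀ * (q.1 - x₀))) +
        (-(q.1 - x₀) * (fderiv ℝ c (x₀, q.1, q.2) ((1:ℝ), (0:ℝ), (0:ℝ))) - 1) *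
          Real.exp (-c (x₀, q.1, q.2) - g q.1 - h x₀ * (q.1 - x₀)) := by
    funext q
    have h1 := auxF'_apply10 c g (x₀, h x₀) q
    dsimp only at h1 ⊢
    rw [h1]
    ring
  -- continuity and bound for the directional derivative of c
  have hdccont : Continuous fun q : ℝ × ℝ =>
      fderiv ℝ c (x₀, q.1, q.2) ((1:ℝ), (0:ℝ), (0:ℝ)) := by
    have h1 : Continuous fun q : ℝ × ℝ => fderiv ℝ c (x₀, q.1, q.2) :=
      (hc1.continuous_fderiv one_ne_zero).comp (continuous_const.prodMk continuous_id)
    exact ((ContinuousLinearMap.apply ℝ ℝ ((1:ℝ), (0:ℝ), (0:ℝ))).continuous).comp h1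
  have hdcb : ∀ q : ℝ × ℝ, |fderiv ℝ c (x₀, q.1, q.2) ((1:ℝ), (0:ℝ), (0:ℝ))| ≤ Lc := by
    intro q
    have h1 := (fderiv ℝ c (x₀, q.1, q.2)).le_opNorm ((1:ℝ), (0:ℝ), (0:ℝ))
    have h2 : ‖((1:ℝ), (0:ℝ), (0:ℝ))‖ = 1 := by simp [Prod.norm_def]
    rw [h2, mul_one, Real.norm_eq_abs] at h1
    exact le_trans h1 (hcg _)
  -- integrability of the numerator integrand
  have IW : Integrable (fun q : ℝ × ℝ =>
      (-(q.1 - x₀) * (fderiv ℝ c (x₀, q.1, q.2) ((1:ℝ), (0:ℝ), (0:ℝ))) - 1) *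
        Real.exp (-c (x₀, q.1, q.2) - g q.1 - h x₀ * (q.1 - x₀))) μ := by
    refine hint _ ((1 + Lc * (A + B)) * Real.exp (Cc + Cg + Ch * B + h x₀ * x₀))
      (((((measurable_fst.sub measurable_const).neg.mul hdccont.measurable).sub
        measurable_const).mul (hum (x₀, h x₀)).exp).aestronglyMeasurable) ?_
    filter_upwards [hq1x, hexp_ub] with q h1 h2
    rw [abs_mul, abs_of_pos (Real.exp_pos _)]
    refine mul_le_mul ?_ h2 (Real.exp_pos _).le (by positivity)
    have h3 : |(-(q.1 - x₀)) * (fderiv ℝ c (x₀, q.1, q.2) ((1:ℝ), (0:ℝ), (0:ℝ)))| ≤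
        (B + A) * Lc := by
      rw [abs_mul, abs_neg]
      exact mul_le_mul h1 (hdcb q) (abs_nonneg _) (by linarith)
    have h4 := abs_le.mp h3
    have h5 : (B + A) * Lc = Lc * (A + B) := by ring
    refine abs_le.mpr ⟨by linarith [h4.1, h4.2], by linarith [h4.1, h4.2]⟩
  -- the numerator identity (uses the first-order condition)
  have hNsplit : ∫ q, auxF' c g ((x₀, h x₀) : ℝ × ℝ) q ((1:ℝ), (0:ℝ)) ∂μ =
      ∫ q, (-(q.1 - x₀) * (fderiv ℝ c (x₀, q.1, q.2) ((1:ℝ), (0:ℝ), (0:ℝ))) - 1) *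
        Real.exp (-c (x₀, q.1, q.2) - g q.1 - h x₀ * (q.1 - x₀)) ∂μ := by
    rw [hval10, integral_add (hFint.const_mul (h x₀)) IW, integral_const_mul,
      hfoc x₀ hx₀, mul_zero, zero_add]
  have hDval : ∫ q, auxF' c g ((x₀, h x₀) : ℝ × ℝ) q ((0:ℝ), (1:ℝ)) ∂μ =
      -∫ q, (q.1 - x₀) ^ 2 *
        Real.exp (-c (x₀, q.1, q.2) - g q.1 - h x₀ * (q.1 - x₀)) ∂μ := by
    rw [hval01, integral_neg]
  -- numerator bound
  have hNb : |∫ q, (-(q.1 - x₀) * (fderiv ℝ c (x₀, q.1, q.2) ((1:ℝ), (0:ℝ), (0:ℝ))) - 1) *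
      Real.exp (-c (x₀, q.1, q.2) - g q.1 - h x₀ * (q.1 - x₀)) ∂μ| ≤
      (1 + Lc * (A + B)) * Real.exp (Cc + Cg + Ch * B + h x₀ * x₀) := by
    have hae : ∀ᵐ q ∂μ, ‖(-(q.1 - x₀) * (fderiv ℝ c (x₀, q.1, q.2) ((1:ℝ), (0:ℝ), (0:ℝ))) - 1) *
        Real.exp (-c (x₀, q.1, q.2) - g q.1 - h x₀ * (q.1 - x₀))‖ ≤
        (1 + Lc * (A + B)) * Real.exp (Cc + Cg + Ch * B + h x₀ * x₀) := by
      filter_upwards [hq1x, hexp_ub] with q h1 h2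
      rw [Real.norm_eq_abs, abs_mul, abs_of_pos (Real.exp_pos _)]
      refine mul_le_mul ?_ h2 (Real.exp_pos _).le (by positivity)
      have h3 : |(-(q.1 - x₀)) * (fderiv ℝ c (x₀, q.1, q.2) ((1:ℝ), (0:ℝ), (0:ℝ)))| ≤
          (B + A) * Lc := by
        rw [abs_mul, abs_neg]
        exact mul_le_mul h1 (hdcb q) (abs_nonneg _) (by linarith)
      have h4 := abs_le.mp h3
      have h5 : (B + A) * Lc = Lc * (A + B) := by ring
      refine abs_le.mpr ⟨by linarith [h4.1, h4.2], by linarith [h4.1, h4.2]⟩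
    have h2 := norm_integral_le_of_norm_le
      (integrable_const ((1 + Lc * (A + B)) * Real.exp (Cc + Cg + Ch * B + h x₀ * x₀))) hae
    rw [Real.norm_eq_abs] at h2
    simpa [measure_univ] using h2
  -- moments of ν
  have hIy : Integrable (fun y : ℝ => y) ν := by
    refine Integrable.mono' (integrable_const B) measurable_id'.aestronglyMeasurable ?_
    filter_upwards [hB] with y hy; simpa using hy
  have hIy2 : Integrable (fun y : ℝ => y ^ 2) ν := by
    refine Integrable.mono' (integrable_const (B ^ 2))
      (measurable_id.pow_const 2).aestronglyMeasurable ?_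
    filter_upwards [hB] with y hy
    rw [Real.norm_eq_abs, abs_of_nonneg (sq_nonneg y)]
    have h1 := abs_le.mp hy
    nlinarith
  have hmom : ∫ y, (y - x₀) ^ 2 ∂ν = (∫ y, y ^ 2 ∂ν) + x₀ ^ 2 := by
    have I1 : Integrable (fun y : ℝ => 2 * x₀ * y) ν := hIy.const_mul (2 * x₀)
    have I2 : Integrable (fun y : ℝ => y ^ 2 - 2 * x₀ * y) ν := hIy2.sub I1
    have e1 : ∀ y : ℝ, (y - x₀) ^ 2 = (y ^ 2 - 2 * x₀ * y) + x₀ ^ 2 := fun y => by ring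
    simp only [e1]
    rw [integral_add I2 (integrable_const _), integral_sub hIy2 I1, integral_const_mul,
      hν0, integral_const]
    simp [measure_univ]
  have hmap : ∫ q : ℝ × ℝ, (q.1 - x₀) ^ 2 ∂μ = ∫ y, (y - x₀) ^ 2 ∂ν := by
    have h1 : (ν.prod ρ).fst = ν := Measure.fst_prod
    rw [hμdef]
    calc ∫ q : ℝ × ℝ, (q.1 - x₀) ^ 2 ∂(ν.prod ρ)
        = ∫ y, (y - x₀) ^ 2 ∂((ν.prod ρ).map Prod.fst) :=
          (integral_map measurable_fst.aemeasurable
            (((continuous_id.sub continuous_const).pow 2).aestronglyMeasurable)).symm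
      _ = ∫ y, (y - x₀) ^ 2 ∂ν := by rw [show (ν.prod ρ).map Prod.fst = ν from h1]
  -- denominator integrability and lower bound
  have IV : Integrable (fun q : ℝ × ℝ => (q.1 - x₀) ^ 2 *
      Real.exp (-c (x₀, q.1, q.2) - g q.1 - h x₀ * (q.1 - x₀))) μ := by
    refine hint _ ((B + A) ^ 2 * Real.exp (Cc + Cg + Ch * B + h x₀ * x₀))
      (((measurable_fst.sub measurable_const).pow_const 2).mul
        (hum (x₀, h x₀)).exp).aestronglyMeasurable ?_
    filter_upwards [hq1x, hexp_ub] with q h1 h2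
    rw [abs_mul, abs_of_pos (Real.exp_pos _), abs_of_nonneg (sq_nonneg _)]
    have h3 : (q.1 - x₀) ^ 2 ≤ (B + A) ^ 2 := by
      have h4 := abs_le.mp h1
      nlinarith
    exact mul_le_mul h3 h2 (Real.exp_pos _).le (by positivity)
  have Isqm : Integrable (fun q : ℝ × ℝ => (q.1 - x₀) ^ 2 *
      Real.exp (-(Cc + Cg + Ch * B) + h x₀ * x₀)) μ := by
    refine hint _ ((B + A) ^ 2 * Real.exp (-(Cc + Cg + Ch * B) + h x₀ * x₀))
      (((measurable_fst.sub measurable_const).pow_const 2).mul_const _).aestronglyMeasurable ?_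
    filter_upwards [hq1x] with q h1
    rw [abs_mul, abs_of_pos (Real.exp_pos _), abs_of_nonneg (sq_nonneg _)]
    have h3 : (q.1 - x₀) ^ 2 ≤ (B + A) ^ 2 := by
      have h4 := abs_le.mp h1
      nlinarith
    exact mul_le_mul_of_nonneg_right h3 (Real.exp_pos _).le
  have hVlb : Real.exp (-(Cc + Cg + Ch * B) + h x₀ * x₀) * ((∫ y, y ^ 2 ∂ν) + x₀ ^ 2) ≤
      ∫ q, (q.1 - x₀) ^ 2 *
        Real.exp (-c (x₀, q.1, q.2) - g q.1 - h x₀ * (q.1 - x₀)) ∂μ := by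
    have h1 : ∫ q, (q.1 - x₀) ^ 2 * Real.exp (-(Cc + Cg + Ch * B) + h x₀ * x₀) ∂μ ≤
        ∫ q, (q.1 - x₀) ^ 2 *
          Real.exp (-c (x₀, q.1, q.2) - g q.1 - h x₀ * (q.1 - x₀)) ∂μ := by
      refine integral_mono_ae Isqm IV ?_
      filter_upwards [hexp_lb] with q hq
      exact mul_le_mul_of_nonneg_left hq (sq_nonneg _)
    have h2 : ∫ q, (q.1 - x₀) ^ 2 * Real.exp (-(Cc + Cg + Ch * B) + h x₀ * x₀) ∂μ =
        Real.exp (-(Cc + Cg + Ch * B) + h x₀ * x₀) * ((∫ y, y ^ 2 ∂ν) + x₀ ^ 2) := by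
      rw [integral_mul_const, hmap, hmom]; ring
    linarith
  -- final assembly
  have hVpos : 0 < ∫ q, (q.1 - x₀) ^ 2 *
      Real.exp (-c (x₀, q.1, q.2) - g q.1 - h x₀ * (q.1 - x₀)) ∂μ := by
    refine lt_of_lt_of_le ?_ hVlb
    have := Real.exp_pos (-(Cc + Cg + Ch * B) + h x₀ * x₀)
    nlinarith [sq_nonneg x₀]
  have hkey : deriv h x₀ * (∫ q, (q.1 - x₀) ^ 2 *
      Real.exp (-c (x₀, q.1, q.2) - g q.1 - h x₀ * (q.1 - x₀)) ∂μ) =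
      ∫ q, (-(q.1 - x₀) * (fderiv ℝ c (x₀, q.1, q.2) ((1:ℝ), (0:ℝ), (0:ℝ))) - 1) *
        Real.exp (-c (x₀, q.1, q.2) - g q.1 - h x₀ * (q.1 - x₀)) ∂μ := by
    have h1 := h0
    rw [happ, hNsplit, hDval] at h1
    linear_combination -h1
  have hdV : |deriv h x₀| * (∫ q, (q.1 - x₀) ^ 2 *
      Real.exp (-c (x₀, q.1, q.2) - g q.1 - h x₀ * (q.1 - x₀)) ∂μ) =
      |∫ q, (-(q.1 - x₀) * (fderiv ℝ c (x₀, q.1, q.2) ((1:ℝ), (0:ℝ), (0:ℝ))) - 1) *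
        Real.exp (-c (x₀, q.1, q.2) - g q.1 - h x₀ * (q.1 - x₀)) ∂μ| := by
    rw [← hkey, abs_mul, abs_of_pos hVpos]
  have hfinal : |deriv h x₀| ≤ ((1 + Lc * (A + B)) *
      Real.exp (Cc + Cg + Ch * B + h x₀ * x₀)) /
      (Real.exp (-(Cc + Cg + Ch * B) + h x₀ * x₀) * (∫ y, y ^ 2 ∂ν)) := by
    have h1 : |deriv h x₀| = |∫ q, (-(q.1 - x₀) *
        (fderiv ℝ c (x₀, q.1, q.2) ((1:ℝ), (0:ℝ), (0:ℝ))) - 1) *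
        Real.exp (-c (x₀, q.1, q.2) - g q.1 - h x₀ * (q.1 - x₀)) ∂μ| /
        (∫ q, (q.1 - x₀) ^ 2 *
          Real.exp (-c (x₀, q.1, q.2) - g q.1 - h x₀ * (q.1 - x₀)) ∂μ) := by
      rw [eq_div_iff (ne_of_gt hVpos)]
      exact hdV
    rw [h1]
    refine div_le_div₀ (by positivity) hNb (by positivity) ?_
    refine le_trans ?_ hVlb
    have hm0 : (0:ℝ) ≤ Real.exp (-(Cc + Cg + Ch * B) + h x₀ * x₀) := (Real.exp_pos _).le
    nlinarith [sq_nonneg x₀]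
  have heq : ((1 + Lc * (A + B)) * Real.exp (Cc + Cg + Ch * B + h x₀ * x₀)) /
      (Real.exp (-(Cc + Cg + Ch * B) + h x₀ * x₀) * (∫ y, y ^ 2 ∂ν)) =
      (1 + Lc * (A + B)) * Real.exp (2 * (Cc + Cg + Ch * B)) / ∫ y, y ^ 2 ∂ν := by
    rw [show Cc + Cg + Ch * B + h x₀ * x₀ =
      2 * (Cc + Cg + Ch * B) + (-(Cc + Cg + Ch * B) + h x₀ * x₀) by ring, Real.exp_add]
    rw [div_eq_div_iff (by positivity) (ne_of_gt hVar)]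
    ring
  rw [← heq]
  exact hfinal
end
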